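/- arXiv:1012.4903 — 2 statements merged into one kernel-verified Lean document; each statement's English description precedes it below -/
import Mathlib

section
/- The one-way information deficit Δ→(ρ) = min_{{Π_i}} S(Σ_i (Π_i⊗I)ρ(Π_i⊗I)) − S(ρ) is nonnegative for every density matrix ρ on H_A ⊗ H_B, and Δ→(ρ) = 0 if and only if ρ is a classical-quantum state, i.e., ρ = Σ_i p_i |i^A⟩⟨i^A| ⊗ ρ_i^B for some orthonormal basis {|i^A⟩}, probabilities p_i, and density matrices ρ_i^B. -/
open Matrix Kronecker BigOperators
open scoped ComplexOrder

noncomputable section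

/-- The von Neumann entropy `S(ρ) = -Tr[ρ log ρ]`, computed via eigenvalues
(junk value `0` if `ρ` is not Hermitian). -/
def vnEntropy {n : Type*} [Fintype n] [DecidableEq n] (ρ : Matrix n n ℂ) : ℝ :=
  if h : ρ.IsHermitian then ∑ i, Real.negMulLog (h.eigenvalues i) else 0

/-- The matrix logarithm via the spectral decomposition (junk value `0` if not Hermitian). -/
def matLog {n : Type*} [Fintype n] [DecidableEq n] (ρ : Matrix n n ℂ) : Matrix n n ℂ :=
  if h : ρ.IsHermitian then
    (h.eigenvectorUnitary : Matrix n n ℂ) *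
      Matrix.diagonal (fun i => (Real.log (h.eigenvalues i) : ℂ)) *
      (star (h.eigenvectorUnitary : Matrix n n ℂ))
  else 0

/-- The quantum relative entropy `S(ρ‖σ) = Tr[ρ log ρ] - Tr[ρ log σ]` (finite formula). -/
def relEntropy {n : Type*} [Fintype n] [DecidableEq n] (ρ σ : Matrix n n ℂ) : ℝ :=
  ((ρ * (matLog ρ - matLog σ)).trace).re

/-- A density matrix: positive semidefinite with unit trace. -/
def IsDensityMatrix {n : Type*} [Fintype n] (ρ : Matrix n n ℂ) : Prop :=
  ρ.PosSemidef ∧ ρ.trace = 1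

/-- `|x⟩⟨y|`. -/
def ketbra {n : Type*} (x y : n → ℂ) : Matrix n n ℂ := Matrix.vecMulVec x (star y)

/-- The rank-one projector `Π_i = |v i⟩⟨v i|`. -/
def proj {ι n : Type*} (v : ι → n → ℂ) (i : ι) : Matrix n n ℂ := ketbra (v i) (v i)

/-- The family `v` is orthonormal. -/
def Orthonormal' {ι n : Type*} [Fintype n] [DecidableEq ι] (v : ι → n → ℂ) : Prop :=
  ∀ i j, star (v i) ⬝ᵥ v j = if i = j then (1 : ℂ) else 0

/-- The family of rank-one projectors from `v` is complete: `∑ i, Π_i = I`. -/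
def Complete' {ι n : Type*} [Fintype ι] [Fintype n] [DecidableEq n] (v : ι → n → ℂ) : Prop :=
  ∑ i, proj v i = 1

/-- The pinching `ρ ↦ ∑ i (Π_i ⊗ I) ρ (Π_i ⊗ I)` of a bipartite state,
for a von Neumann measurement on the first subsystem. -/
def pinch {ι A B : Type*} [Fintype ι] [Fintype A] [Fintype B] [DecidableEq B]
    (v : ι → A → ℂ) (ρ : Matrix (A × B) (A × B) ℂ) : Matrix (A × B) (A × B) ℂ :=
  ∑ i, (proj v i ⊗ₖ (1 : Matrix B B ℂ)) * ρ * (proj v i ⊗ₖ (1 : Matrix B B ℂ))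

/-- The pinching `ρ ↦ ∑ i Π_i ρ Π_i` on a single system. -/
def pinchA {ι A : Type*} [Fintype ι] [Fintype A]
    (v : ι → A → ℂ) (ρ : Matrix A A ℂ) : Matrix A A ℂ :=
  ∑ i, proj v i * ρ * proj v i

/-- Partial trace over the first tensor factor. -/
def trFst {M n : Type*} [Fintype M] (ρ : Matrix (M × n) (M × n) ℂ) : Matrix n n ℂ :=
  fun i j => ∑ m, ρ (m, i) (m, j)

/-- Partial trace over the second tensor factor. -/
def trSnd {n B : Type*} [Fintype B] (ρ : Matrix (n × B) (n × B) ℂ) : Matrix n n ℂ :=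
  fun a a' => ∑ b, ρ (a, b) (a', b)

/-- The operator `O_{ij} = (⟨i^A| ⊗ I) ρ (|j^A⟩ ⊗ I)` on `H_B`. -/
def Oij {ι A B : Type*} [Fintype A] [Fintype B] (v : ι → A → ℂ)
    (ρ : Matrix (A × B) (A × B) ℂ) (i j : ι) : Matrix B B ℂ :=
  fun k l => ∑ a, ∑ b, star (v i a) * ρ (a, k) (b, l) * v j b

/-- The post-measurement state `ρ₂ = ∑_{i,j} |i^M⟩⟨j^M| ⊗ |i^A⟩⟨j^A| ⊗ O_{ij}`. -/
def rho2 {ι M A B : Type*} [Fintype ι] [Fintype A] [Fintype B]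
    (w : ι → M → ℂ) (v : ι → A → ℂ) (ρ : Matrix (A × B) (A × B) ℂ) :
    Matrix (M × A × B) (M × A × B) ℂ :=
  ∑ i, ∑ j, ketbra (w i) (w j) ⊗ₖ (ketbra (v i) (v j) ⊗ₖ Oij v ρ i j)

/-- The outcome probability `p_i = Tr[(Π_i ⊗ I) ρ (Π_i ⊗ I)]`. -/
def pOut {ι A B : Type*} [Fintype A] [Fintype B] [DecidableEq B]
    (v : ι → A → ℂ) (ρ : Matrix (A × B) (A × B) ℂ) (i : ι) : ℝ :=
  (((proj v i ⊗ₖ (1 : Matrix B B ℂ)) * ρ * (proj v i ⊗ₖ (1 : Matrix B B ℂ))).trace).re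

/-- The post-measurement state `ρ_i = (Π_i ⊗ I) ρ (Π_i ⊗ I) / p_i`. -/
def postState {ι A B : Type*} [Fintype A] [Fintype B] [DecidableEq B]
    (v : ι → A → ℂ) (ρ : Matrix (A × B) (A × B) ℂ) (i : ι) : Matrix (A × B) (A × B) ℂ :=
  ((pOut v ρ i : ℂ))⁻¹ • ((proj v i ⊗ₖ (1 : Matrix B B ℂ)) * ρ * (proj v i ⊗ₖ (1 : Matrix B B ℂ)))

/-- The average post-measurement entropy `∑ i p_i S(ρ_i)`. -/
def condEnt {ι A B : Type*} [Fintype ι] [Fintype A] [DecidableEq A] [Fintype B] [DecidableEq B]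
    (v : ι → A → ℂ) (ρ : Matrix (A × B) (A × B) ℂ) : ℝ :=
  ∑ i, pOut v ρ i * vnEntropy (postState v ρ i)

/-- A von Neumann measurement on `H_A`: a complete set of rank-one orthogonal projectors,
given by an orthonormal basis of `H_A`. -/
def IsMeas {A : Type*} [Fintype A] [DecidableEq A] (v : A → A → ℂ) : Prop :=
  Orthonormal' v ∧ Complete' v

/-- `ρ` is a classical-quantum state:
`ρ = ∑ i p_i |i^A⟩⟨i^A| ⊗ ρ_i^B` for some orthonormal basis of `H_A`. -/
def IsCQ {A B : Type*} [Fintype A] [DecidableEq A] [Fintype B]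
    (ρ : Matrix (A × B) (A × B) ℂ) : Prop :=
  ∃ (v : A → A → ℂ) (p : A → ℝ) (σ : A → Matrix B B ℂ),
    Orthonormal' v ∧ Complete' v ∧ (∀ i, 0 ≤ p i) ∧ ∑ i, p i = 1 ∧
    (∀ i, p i ≠ 0 → IsDensityMatrix (σ i)) ∧
    ρ = ∑ i, (p i : ℂ) • (proj v i ⊗ₖ σ i)

/-- The one-way information deficit `Δ→(ρ) = min_{Π} S(∑ᵢ (Πᵢ⊗I)ρ(Πᵢ⊗I)) - S(ρ)`. -/
def deficit {A B : Type*} [Fintype A] [DecidableEq A] [Fintype B] [DecidableEq B]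
    (ρ : Matrix (A × B) (A × B) ℂ) : ℝ :=
  sInf {x : ℝ | ∃ v : A → A → ℂ, IsMeas v ∧ x = vnEntropy (pinch v ρ)} - vnEntropy ρ

/-- The quantum discord `δ→(ρ) = S(ρ^A) - S(ρ) + min_{Π} ∑ i p_i S(ρ_i)`. -/
def discord {A B : Type*} [Fintype A] [DecidableEq A] [Fintype B] [DecidableEq B]
    (ρ : Matrix (A × B) (A × B) ℂ) : ℝ :=
  vnEntropy (trSnd ρ) - vnEntropy ρ +
    sInf {x : ℝ | ∃ v : A → A → ℂ, IsMeas v ∧ x = condEnt v ρ}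

/-- The application `ρ ↦ ∑ k (I ⊗ K_k) ρ (I ⊗ K_k)†` of a channel (in Kraus form) on `B`. -/
def applyChanB {A B B' κ : Type*} [Fintype A] [DecidableEq A] [Fintype B] [Fintype κ]
    (K : κ → Matrix B' B ℂ) (ρ : Matrix (A × B) (A × B) ℂ) :
    Matrix (A × B') (A × B') ℂ :=
  ∑ k, ((1 : Matrix A A ℂ) ⊗ₖ K k) * ρ * ((1 : Matrix A A ℂ) ⊗ₖ K k)ᴴ

end
noncomputable section AuxProof

open Polynomial

namespace DeficitAux

variable {n : Type*} [Fintype n] [DecidableEq n]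

lemma aeval_unitary_conj (U M : Matrix n n ℂ) (hU1 : U * star U = 1) (hU2 : star U * U = 1)
    (p : ℂ[X]) : aeval (U * M * star U) p = U * (aeval M p) * star U := by
  have hcancel : ∀ X : Matrix n n ℂ, star U * (U * X) = X := fun X => by
    rw [← Matrix.mul_assoc, hU2, Matrix.one_mul]
  induction p using Polynomial.induction_on' with
  | add p q hp hq => simp only [map_add, hp, hq, Matrix.mul_add, Matrix.add_mul]
  | monomial k c =>
    have hpow : ∀ k : ℕ, (U * M * star U) ^ k = U * M ^ k * star U := by
      intro k
      induction k with
      | zero => simp [hU1]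
      | succ k ih =>
        rw [pow_succ, ih, pow_succ]
        simp only [Matrix.mul_assoc]
        rw [hcancel]
    rw [aeval_monomial, aeval_monomial, hpow,
      ← Algebra.smul_def, ← Algebra.smul_def, Matrix.mul_smul, Matrix.smul_mul]

lemma aeval_diagonal (d : n → ℂ) (p : ℂ[X]) :
    aeval (Matrix.diagonal d) p = Matrix.diagonal fun i => p.eval (d i) := by
  induction p using Polynomial.induction_on' with
  | add p q hp hq =>
    rw [map_add, hp, hq, Matrix.diagonal_add]
    congr 1
    funext i
    simp [Polynomial.eval_add]
  | monomial k c =>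
    rw [aeval_monomial, ← Algebra.smul_def, Matrix.diagonal_pow]
    ext i j
    by_cases hij : i = j <;>
      simp [hij, Matrix.diagonal_apply, Polynomial.eval_monomial]

lemma commute_aeval (M X : Matrix n n ℂ) (h : X * M = M * X) (p : ℂ[X]) :
    X * aeval M p = aeval M p * X := by
  have h' : Commute X M := h
  induction p using Polynomial.induction_on' with
  | add p q hp hq => simp only [map_add, Matrix.mul_add, Matrix.add_mul, hp, hq]
  | monomial k c =>
    rw [aeval_monomial, ← Algebra.smul_def, mul_smul_comm, smul_mul_assoc,
      (h'.pow_right k).eq]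

lemma trace_unitary_conj (U M : Matrix n n ℂ) (hU2 : star U * U = 1) :
    (U * M * star U).trace = M.trace := by
  rw [Matrix.trace_mul_cycle, hU2, Matrix.one_mul]

/-- Packaged spectral theorem with an abstract unitary, to avoid motive issues. -/
lemma spectral_pack {σ : Matrix n n ℂ} (h : σ.IsHermitian) :
    ∃ V : Matrix n n ℂ,
      V * star V = 1 ∧ star V * V = 1 ∧
      σ = V * Matrix.diagonal (fun i => ((h.eigenvalues i : ℝ) : ℂ)) * star V ∧
      matLog σ = V * Matrix.diagonal (fun i => ((Real.log (h.eigenvalues i) : ℝ) : ℂ)) * star V ∧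
      ∀ p : ℂ[X], aeval σ p
        = V * Matrix.diagonal (fun i => p.eval ((h.eigenvalues i : ℝ) : ℂ)) * star V := by
  refine ⟨(h.eigenvectorUnitary : Matrix n n ℂ),
    Matrix.mem_unitaryGroup_iff.mp h.eigenvectorUnitary.2,
    Matrix.mem_unitaryGroup_iff'.mp h.eigenvectorUnitary.2, ?_, ?_, ?_⟩
  · exact h.spectral_theorem
  · rw [matLog, dif_pos h]
  · intro p
    have hs : σ = (h.eigenvectorUnitary : Matrix n n ℂ) *
        Matrix.diagonal (fun i => ((h.eigenvalues i : ℝ) : ℂ)) *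
        star (h.eigenvectorUnitary : Matrix n n ℂ) := h.spectral_theorem
    conv_lhs => rw [hs]
    rw [aeval_unitary_conj _ _ (Matrix.mem_unitaryGroup_iff.mp h.eigenvectorUnitary.2)
      (Matrix.mem_unitaryGroup_iff'.mp h.eigenvectorUnitary.2), aeval_diagonal]

end DeficitAux

end AuxProof
namespace DeficitAux

open Polynomial

variable {n : Type*} [Fintype n] [DecidableEq n]

lemma matLog_aeval {σ : Matrix n n ℂ} (h : σ.IsHermitian) :
    ∃ p : ℂ[X], aeval σ p = matLog σ := by
  classical
  obtain ⟨V, hV1, hV2, hfact, hlog, haeval⟩ := spectral_pack h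
  set s : Finset ℂ := Finset.univ.image (fun i => ((h.eigenvalues i : ℝ) : ℂ)) with hs
  refine ⟨Lagrange.interpolate s id (fun z => ((Real.log z.re : ℝ) : ℂ)), ?_⟩
  rw [haeval, hlog]
  have hfun : (fun i => eval ((h.eigenvalues i : ℝ) : ℂ)
      (Lagrange.interpolate s id (fun z => ((Real.log z.re : ℝ) : ℂ))))
      = fun i => ((Real.log (h.eigenvalues i) : ℝ) : ℂ) := by
    funext i
    have hmem : ((h.eigenvalues i : ℝ) : ℂ) ∈ s := by
      rw [hs]
      exact Finset.mem_image_of_mem _ (Finset.mem_univ i)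
    have := Lagrange.eval_interpolate_at_node (fun z => ((Real.log z.re : ℝ) : ℂ))
      (Set.injOn_id _) hmem
    simpa using this
  rw [hfun]

lemma commute_matLog {σ X : Matrix n n ℂ} (h : σ.IsHermitian) (hX : X * σ = σ * X) :
    X * matLog σ = matLog σ * X := by
  obtain ⟨p, hp⟩ := matLog_aeval h
  rw [← hp]
  exact commute_aeval σ X hX p

lemma trace_eq_sum_eigenvalues {σ : Matrix n n ℂ} (h : σ.IsHermitian) :
    σ.trace = ∑ i, ((h.eigenvalues i : ℝ) : ℂ) := by
  obtain ⟨V, hV1, hV2, hfact, -, -⟩ := spectral_pack h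
  conv_lhs => rw [hfact]
  rw [trace_unitary_conj _ _ hV2, Matrix.trace_diagonal]

lemma sum_eigenvalues_eq_one {σ : Matrix n n ℂ} (h : IsDensityMatrix σ) :
    ∑ i, h.1.1.eigenvalues i = 1 := by
  have h1 := (trace_eq_sum_eigenvalues h.1.1).symm.trans h.2
  exact_mod_cast h1

lemma psd_eq_zero_of_trace_eq_zero {σ : Matrix n n ℂ} (h : σ.PosSemidef)
    (ht : σ.trace = 0) : σ = 0 := by
  obtain ⟨V, hV1, hV2, hfact, -, -⟩ := spectral_pack h.1
  have h1 := (trace_eq_sum_eigenvalues h.1).symm.trans ht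
  have hsum : ∑ i, h.1.eigenvalues i = 0 := by exact_mod_cast h1
  have hz : ∀ i ∈ Finset.univ, h.1.eigenvalues i = 0 :=
    (Finset.sum_eq_zero_iff_of_nonneg (fun j _ => h.eigenvalues_nonneg j)).mp hsum
  rw [hfact]
  have hdz : (Matrix.diagonal (fun i => ((h.1.eigenvalues i : ℝ) : ℂ))) = 0 := by
    ext i j
    by_cases hij : i = j <;> simp [Matrix.diagonal_apply, hij, hz i (Finset.mem_univ i), hz j (Finset.mem_univ j)]
  rw [hdz, Matrix.mul_zero, Matrix.zero_mul]

lemma vnEntropy_eq {σ : Matrix n n ℂ} (h : σ.IsHermitian) :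
    vnEntropy σ = ∑ i, Real.negMulLog (h.eigenvalues i) := by
  rw [vnEntropy, dif_pos h]

lemma trace_mul_matLog_self {σ : Matrix n n ℂ} (h : σ.IsHermitian) :
    ((σ * matLog σ).trace).re = ∑ i, h.eigenvalues i * Real.log (h.eigenvalues i) := by
  obtain ⟨V, hV1, hV2, hfact, hlog, -⟩ := spectral_pack h
  have hcancel : ∀ X : Matrix n n ℂ, star V * (V * X) = X := fun X => by
    rw [← Matrix.mul_assoc, hV2, Matrix.one_mul]
  have key : σ * matLog σ
      = V * (Matrix.diagonal (fun i => ((h.eigenvalues i : ℝ) : ℂ)) *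
          Matrix.diagonal (fun i => ((Real.log (h.eigenvalues i) : ℝ) : ℂ))) * star V := by
    conv_lhs => rw [hlog]
    conv_lhs => lhs; rw [hfact]
    simp only [Matrix.mul_assoc, hcancel]
  rw [key, trace_unitary_conj _ _ hV2, Matrix.diagonal_mul_diagonal, Matrix.trace_diagonal,
    Complex.re_sum]
  refine Finset.sum_congr rfl fun i _ => ?_
  simp [← Complex.ofReal_mul]

lemma vnEntropy_eq_neg_trace {σ : Matrix n n ℂ} (h : σ.IsHermitian) :
    vnEntropy σ = -((σ * matLog σ).trace).re := by
  rw [vnEntropy_eq h, trace_mul_matLog_self h, ← Finset.sum_neg_distrib]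
  exact Finset.sum_congr rfl fun i _ => by rw [Real.negMulLog]; ring

/-- The double sum formula for `Re Tr[ρ log σ]`. -/
lemma trace_mul_matLog (ρ σ : Matrix n n ℂ) (hρ : ρ.IsHermitian) (hσ : σ.IsHermitian)
    {U V : Matrix n n ℂ}
    (hU1 : U * star U = 1) (hU2 : star U * U = 1)
    (hρfact : ρ = U * Matrix.diagonal (fun i => ((hρ.eigenvalues i : ℝ) : ℂ)) * star U)
    (hlog : matLog σ
      = V * Matrix.diagonal (fun i => ((Real.log (hσ.eigenvalues i) : ℝ) : ℂ)) * star V) :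
    ((ρ * matLog σ).trace).re
      = ∑ i, ∑ j, Complex.normSq ((star V * U) j i) *
          (hρ.eigenvalues i * Real.log (hσ.eigenvalues j)) := by
  set W : Matrix n n ℂ := star V * U with hW
  have hWH : star U * V = Wᴴ := by
    rw [hW, Matrix.star_eq_conjTranspose, Matrix.star_eq_conjTranspose,
      Matrix.conjTranspose_mul, Matrix.conjTranspose_conjTranspose]
  have key : ρ * matLog σ
      = U * (Matrix.diagonal (fun i => ((hρ.eigenvalues i : ℝ) : ℂ)) *
          (Wᴴ * (Matrix.diagonal (fun j => ((Real.log (hσ.eigenvalues j) : ℝ) : ℂ)) * W)))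
          * star U := by
    conv_lhs => rw [hlog]
    conv_lhs => lhs; rw [hρfact]
    rw [← hWH, hW]
    have h1 : star V * (U * star U) = star V := by rw [hU1, Matrix.mul_one]
    simp only [Matrix.mul_assoc, h1]
  rw [key, trace_unitary_conj _ _ hU2]
  have hterm : ∀ (a b : ℝ) (w : ℂ),
      (a : ℂ) * ((starRingEnd ℂ) w * ((b : ℂ) * w)) = ((Complex.normSq w * (a * b) : ℝ) : ℂ) := by
    intro a b w
    have hcw : (starRingEnd ℂ) w * w = (Complex.normSq w : ℂ) := by
      rw [mul_comm, Complex.mul_conj]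
    calc (a : ℂ) * ((starRingEnd ℂ) w * ((b : ℂ) * w))
        = ((starRingEnd ℂ) w * w) * ((a : ℂ) * (b : ℂ)) := by ring
      _ = ((Complex.normSq w * (a * b) : ℝ) : ℂ) := by rw [hcw]; push_cast; ring
  have e1 : (Matrix.diagonal (fun i => ((hρ.eigenvalues i : ℝ) : ℂ)) *
      (Wᴴ * (Matrix.diagonal (fun j => ((Real.log (hσ.eigenvalues j) : ℝ) : ℂ)) * W))).trace
      = ∑ i, ∑ j, ((Complex.normSq (W j i) *
          (hρ.eigenvalues i * Real.log (hσ.eigenvalues j)) : ℝ) : ℂ) := by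
    rw [Matrix.trace]
    refine Finset.sum_congr rfl fun i _ => ?_
    rw [Matrix.diag_apply, Matrix.diagonal_mul, Matrix.mul_apply, Finset.mul_sum]
    refine Finset.sum_congr rfl fun j _ => ?_
    rw [Matrix.conjTranspose_apply, Matrix.diagonal_mul]
    exact hterm _ _ _
  rw [e1, Complex.re_sum]
  refine Finset.sum_congr rfl fun i _ => ?_
  rw [Complex.re_sum]
  exact Finset.sum_congr rfl fun j _ => Complex.ofReal_re _

end DeficitAux
namespace DeficitAux

open Polynomial

variable {n : Type*} [Fintype n] [DecidableEq n]

/-- Klein's inequality with equality case, under the kernel condition. -/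
lemma klein {ρ σ : Matrix n n ℂ} (hρ : IsDensityMatrix ρ) (hσ : IsDensityMatrix σ)
    (hker : ∀ x, σ *ᵥ x = 0 → ρ *ᵥ x = 0) :
    0 ≤ relEntropy ρ σ ∧ (relEntropy ρ σ = 0 → ρ = σ) := by
  classical
  obtain ⟨U, hU1, hU2, hρfact, hρlog, -⟩ := spectral_pack hρ.1.1
  obtain ⟨V, hV1, hV2, hσfact, hσlog, -⟩ := spectral_pack hσ.1.1
  set lam : n → ℝ := hρ.1.1.eigenvalues with hlamdef
  set mu : n → ℝ := hσ.1.1.eigenvalues with hmudef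
  set W : Matrix n n ℂ := star V * U with hW
  have hWH : star U * V = Wᴴ := by
    rw [hW, Matrix.star_eq_conjTranspose, Matrix.star_eq_conjTranspose,
      Matrix.conjTranspose_mul, Matrix.conjTranspose_conjTranspose]
  have hlam0 : ∀ i, 0 ≤ lam i := fun i => hρ.1.eigenvalues_nonneg i
  have hmu0 : ∀ j, 0 ≤ mu j := fun j => hσ.1.eigenvalues_nonneg j
  have hlam1 : ∑ i, lam i = 1 := sum_eigenvalues_eq_one hρ
  have hmu1 : ∑ j, mu j = 1 := sum_eigenvalues_eq_one hσ
  set c : n → n → ℝ := fun i j => Complex.normSq (W j i) with hc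
  have hc0 : ∀ i j, 0 ≤ c i j := fun i j => Complex.normSq_nonneg _
  -- W is unitary, hence doubly stochastic |W|²
  have hWW : W * star W = 1 := by
    rw [hW, Matrix.star_mul, star_star]
    calc star V * U * (star U * V) = star V * (U * star U * V) := by
          simp only [Matrix.mul_assoc]
      _ = 1 := by rw [hU1, Matrix.one_mul]; exact hV2
  have hWW' : star W * W = 1 := by
    rw [hW, Matrix.star_mul, star_star]
    calc star U * V * (star V * U) = star U * (V * star V * U) := by
          simp only [Matrix.mul_assoc]
      _ = 1 := by rw [hV1, Matrix.one_mul]; exact hU2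
  have hrow : ∀ j, ∑ i, c i j = 1 := by
    intro j
    have h0 := congrFun (congrFun hWW j) j
    have h1 : (W * star W) j j = ∑ i, (c i j : ℂ) := by
      rw [Matrix.mul_apply]
      refine Finset.sum_congr rfl fun i _ => ?_
      rw [show (star W) i j = (starRingEnd ℂ) (W j i) from rfl, Complex.mul_conj]
    rw [h1, Matrix.one_apply_eq] at h0
    exact_mod_cast h0
  have hcol : ∀ i, ∑ j, c i j = 1 := by
    intro i
    have h0 := congrFun (congrFun hWW' i) i
    have h1 : (star W * W) i i = ∑ j, (c i j : ℂ) := by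
      rw [Matrix.mul_apply]
      refine Finset.sum_congr rfl fun j _ => ?_
      rw [show (star W) i j = (starRingEnd ℂ) (W j i) from rfl, mul_comm, Complex.mul_conj]
    rw [h1, Matrix.one_apply_eq] at h0
    exact_mod_cast h0
  -- support condition
  have hsupp : ∀ i j, mu j = 0 → lam i = 0 ∨ W j i = 0 := by
    intro i j hmuj
    have hcolzero : σ *ᵥ (fun k => V k j) = 0 := by
      have hσV : σ * V = V * Matrix.diagonal (fun j => ((mu j : ℝ) : ℂ)) := by
        conv_lhs => lhs; rw [hσfact]
        calc V * Matrix.diagonal (fun j => ((mu j : ℝ) : ℂ)) * star V * V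
            = V * Matrix.diagonal (fun j => ((mu j : ℝ) : ℂ)) * (star V * V) := by
              rw [Matrix.mul_assoc]
          _ = _ := by rw [hV2, Matrix.mul_one]
      funext k
      have h2 : (σ *ᵥ fun m => V m j) k = (σ * V) k j := by
        rw [Matrix.mulVec, Matrix.mul_apply]; rfl
      rw [h2, hσV, Matrix.mul_diagonal, hmuj]
      simp
    have hρzero := hker _ hcolzero
    have hDW : Matrix.diagonal (fun i => ((lam i : ℝ) : ℂ)) * Wᴴ = star U * (ρ * V) := by
      conv_rhs => rw [hρfact]
      have hcancelU : ∀ X : Matrix n n ℂ, star U * (U * X) = X := fun X => by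
        rw [← Matrix.mul_assoc, hU2, Matrix.one_mul]
      calc Matrix.diagonal (fun i => ((lam i : ℝ) : ℂ)) * Wᴴ
          = Matrix.diagonal (fun i => ((lam i : ℝ) : ℂ)) * (star U * V) := by rw [hWH]
        _ = star U * (U * (Matrix.diagonal (fun i => ((lam i : ℝ) : ℂ)) * (star U * V))) := by
              rw [hcancelU]
        _ = star U * (U * Matrix.diagonal (fun i => ((lam i : ℝ) : ℂ)) * star U * V) := by
              simp only [Matrix.mul_assoc]
    have hz : (Matrix.diagonal (fun i => ((lam i : ℝ) : ℂ)) * Wᴴ) i j = 0 := by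
      rw [hDW, Matrix.mul_apply]
      have h3 : ∀ k, (ρ * V) k j = 0 := by
        intro k
        have h4 : (ρ * V) k j = (ρ *ᵥ fun m => V m j) k := by
          rw [Matrix.mulVec, Matrix.mul_apply]; rfl
        rw [h4, hρzero]
        rfl
      simp [h3]
    rw [Matrix.diagonal_mul] at hz
    rcases mul_eq_zero.mp hz with h5 | h5
    · exact Or.inl (by exact_mod_cast h5)
    · refine Or.inr ?_
      rwa [show Wᴴ i j = (starRingEnd ℂ) (W j i) from rfl, starRingEnd_apply,
        star_eq_zero] at h5
  -- the relative entropy as a double sum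
  have hre : relEntropy ρ σ = (∑ i, lam i * Real.log (lam i))
      - ∑ i, ∑ j, c i j * (lam i * Real.log (mu j)) := by
    rw [relEntropy, Matrix.mul_sub, Matrix.trace_sub, Complex.sub_re,
      trace_mul_matLog_self hρ.1.1,
      trace_mul_matLog ρ σ hρ.1.1 hσ.1.1 hU1 hU2 hρfact hσlog]
  have hre2 : relEntropy ρ σ
      = ∑ i, ∑ j, (c i j * (lam i * Real.log (lam i)) - c i j * (lam i * Real.log (mu j))) := by
    rw [hre]
    rw [show (∑ i, lam i * Real.log (lam i))
        = ∑ i, ∑ j, c i j * (lam i * Real.log (lam i)) from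
      Finset.sum_congr rfl fun i _ => by rw [← Finset.sum_mul, hcol i, one_mul]]
    rw [← Finset.sum_sub_distrib]
    exact Finset.sum_congr rfl fun i _ => by rw [← Finset.sum_sub_distrib]
  -- pointwise bound
  have hfg : ∀ i j, c i j * (lam i - mu j)
      ≤ c i j * (lam i * Real.log (lam i)) - c i j * (lam i * Real.log (mu j)) := by
    intro i j
    by_cases hcz : c i j = 0
    · simp [hcz]
    by_cases hl0 : lam i = 0
    · rw [hl0]
      nlinarith [mul_nonneg (hc0 i j) (hmu0 j)]
    have hl : 0 < lam i := lt_of_le_of_ne (hlam0 i) (Ne.symm hl0)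
    have hm : 0 < mu j := by
      rcases eq_or_lt_of_le (hmu0 j) with h6 | h6
      · exfalso
        rcases hsupp i j h6.symm with h7 | h7
        · exact hl0 h7
        · exact hcz (by rw [hc]; simp [h7])
      · exact h6
    have key : lam i - mu j ≤ lam i * (Real.log (lam i) - Real.log (mu j)) := by
      have h4 := Real.log_le_sub_one_of_pos (div_pos hm hl)
      rw [Real.log_div hm.ne' hl.ne'] at h4
      have h5 := mul_le_mul_of_nonneg_left h4 hl.le
      have hdiv : mu j / lam i * lam i = mu j := div_mul_cancel₀ _ hl.ne'
      nlinarith [h5, hdiv]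
    calc c i j * (lam i - mu j) ≤ c i j * (lam i * (Real.log (lam i) - Real.log (mu j))) :=
          mul_le_mul_of_nonneg_left key (hc0 i j)
      _ = _ := by ring
  -- the lower-bound sum vanishes
  have hgsum : ∑ i, ∑ j, c i j * (lam i - mu j) = 0 := by
    have e1 : ∑ i, ∑ j, c i j * lam i = 1 := by
      calc ∑ i, ∑ j, c i j * lam i = ∑ i, lam i := by
            refine Finset.sum_congr rfl fun i _ => ?_
            rw [← Finset.sum_mul, hcol i, one_mul]
        _ = 1 := hlam1
    have e2 : ∑ i, ∑ j, c i j * mu j = 1 := by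
      rw [Finset.sum_comm]
      calc ∑ j, ∑ i, c i j * mu j = ∑ j, mu j := by
            refine Finset.sum_congr rfl fun j _ => ?_
            rw [← Finset.sum_mul, hrow j, one_mul]
        _ = 1 := hmu1
    have e3 : ∀ i j, c i j * (lam i - mu j) = c i j * lam i - c i j * mu j :=
      fun i j => by ring
    simp only [e3]
    calc ∑ i, ∑ j, (c i j * lam i - c i j * mu j)
        = ∑ i, ((∑ j, c i j * lam i) - ∑ j, c i j * mu j) :=
          Finset.sum_congr rfl fun i _ => Finset.sum_sub_distrib _ _
      _ = (∑ i, ∑ j, c i j * lam i) - ∑ i, ∑ j, c i j * mu j := Finset.sum_sub_distrib _ _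
      _ = 0 := by rw [e1, e2, sub_self]
  have hnonneg : 0 ≤ relEntropy ρ σ := by
    rw [hre2]
    calc (0:ℝ) = ∑ i, ∑ j, c i j * (lam i - mu j) := hgsum.symm
      _ ≤ _ := Finset.sum_le_sum fun i _ => Finset.sum_le_sum fun j _ => hfg i j
  refine ⟨hnonneg, fun h0 => ?_⟩
  -- equality case: every summand of the gap vanishes
  have hzero : ∀ i j, c i j * (lam i * Real.log (lam i)) - c i j * (lam i * Real.log (mu j))
      - c i j * (lam i - mu j) = 0 := by
    have hsum0 : ∑ p : n × n, (c p.1 p.2 * (lam p.1 * Real.log (lam p.1))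
        - c p.1 p.2 * (lam p.1 * Real.log (mu p.2)) - c p.1 p.2 * (lam p.1 - mu p.2)) = 0 := by
      rw [Fintype.sum_prod_type]
      have hsplit : ∑ i, ∑ j, (c i j * (lam i * Real.log (lam i))
          - c i j * (lam i * Real.log (mu j)) - c i j * (lam i - mu j))
          = (∑ i, ∑ j, (c i j * (lam i * Real.log (lam i))
              - c i j * (lam i * Real.log (mu j)))) - ∑ i, ∑ j, c i j * (lam i - mu j) := by
        calc ∑ i, ∑ j, (c i j * (lam i * Real.log (lam i))
            - c i j * (lam i * Real.log (mu j)) - c i j * (lam i - mu j))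
            = ∑ i, ((∑ j, (c i j * (lam i * Real.log (lam i))
                - c i j * (lam i * Real.log (mu j)))) - ∑ j, c i j * (lam i - mu j)) :=
              Finset.sum_congr rfl fun i _ => Finset.sum_sub_distrib _ _
          _ = _ := Finset.sum_sub_distrib _ _
      rw [hsplit, ← hre2, h0, hgsum, sub_self]
    intro i j
    exact (Finset.sum_eq_zero_iff_of_nonneg
      (fun p _ => sub_nonneg.mpr (hfg p.1 p.2))).mp hsum0 (i, j) (Finset.mem_univ _)
  -- hence the eigenvalues match wherever W is nonzero
  have hkey : ∀ i j, W j i ≠ 0 → mu j = lam i := by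
    intro i j hw
    have hcpos : 0 < c i j := by
      have : W j i ≠ 0 := hw
      simpa [hc] using Complex.normSq_pos.mpr this
    have heq := hzero i j
    by_cases hl0 : lam i = 0
    · rw [hl0] at heq
      have hcmu : c i j * mu j = 0 := by linear_combination heq
      rcases mul_eq_zero.mp hcmu with h5 | h5
      · exact absurd h5 hcpos.ne'
      · rw [h5, hl0]
    · have hl : 0 < lam i := lt_of_le_of_ne (hlam0 i) (Ne.symm hl0)
      have hm : 0 < mu j := by
        rcases eq_or_lt_of_le (hmu0 j) with h6 | h6
        · exfalso
          rcases hsupp i j h6.symm with h7 | h7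
          · exact hl0 h7
          · exact hw h7
        · exact h6
      have h6 : lam i * Real.log (lam i) - lam i * Real.log (mu j) - (lam i - mu j) = 0 := by
        have h7 : c i j * (lam i * Real.log (lam i) - lam i * Real.log (mu j)
            - (lam i - mu j)) = 0 := by linear_combination heq
        rcases mul_eq_zero.mp h7 with h8 | h8
        · exact absurd h8 hcpos.ne'
        · exact h8
      by_contra hne
      have hstrict := Real.log_lt_sub_one_of_pos (div_pos hm hl) (by
        intro h1
        apply hne
        have h2 := (div_eq_iff hl.ne').mp h1
        simpa using h2)
      rw [Real.log_div hm.ne' hl.ne'] at hstrict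
      have h5 := mul_lt_mul_of_pos_left hstrict hl
      have hdiv : mu j / lam i * lam i = mu j := div_mul_cancel₀ _ hl.ne'
      nlinarith [h5, hdiv, h6]
  -- conclude matrix equality
  have hEW : Matrix.diagonal (fun j => ((mu j : ℝ) : ℂ)) * W
      = W * Matrix.diagonal (fun i => ((lam i : ℝ) : ℂ)) := by
    ext j i
    rw [Matrix.diagonal_mul, Matrix.mul_diagonal]
    by_cases hw : W j i = 0
    · simp [hw]
    · rw [hkey i j hw]
      ring
  have hσU : σ * U = U * Matrix.diagonal (fun i => ((lam i : ℝ) : ℂ)) := by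
    conv_lhs => lhs; rw [hσfact]
    simp only [Matrix.mul_assoc]
    rw [← hW, hEW, hW]
    simp only [← Matrix.mul_assoc]
    rw [hV1, Matrix.one_mul]
  rw [hρfact, ← hσU, Matrix.mul_assoc, hU1, Matrix.mul_one]

end DeficitAux
namespace DeficitAux

open Polynomial

lemma sum_mulVec' {n κ : Type*} [Fintype n] [Fintype κ] (M : κ → Matrix n n ℂ) (x : n → ℂ) :
    (∑ k, M k) *ᵥ x = ∑ k, (M k *ᵥ x) := by
  funext i
  rw [Finset.sum_apply]
  simp only [Matrix.mulVec, dotProduct, Matrix.sum_apply, Finset.sum_mul]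
  rw [Finset.sum_comm]

lemma dotProduct_sum' {n κ : Type*} [Fintype n] [Fintype κ] (v : n → ℂ) (w : κ → n → ℂ) :
    v ⬝ᵥ (∑ k, w k) = ∑ k, v ⬝ᵥ w k := by
  simp only [dotProduct, Finset.sum_apply, Finset.mul_sum]
  rw [Finset.sum_comm]

section pinch

variable {A B : Type*} [Fintype A] [DecidableEq A] [Fintype B] [DecidableEq B]

/-- The projector `Π_i ⊗ 1` on the joint system. -/
def PP (v : A → A → ℂ) (i : A) : Matrix (A × B) (A × B) ℂ :=
  proj v i ⊗ₖ (1 : Matrix B B ℂ)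

lemma pinch_eq (v : A → A → ℂ) (ρ : Matrix (A × B) (A × B) ℂ) :
    pinch v ρ = ∑ i, PP v i * ρ * PP v i := rfl

lemma proj_conjTranspose (v : A → A → ℂ) (i : A) : (proj v i)ᴴ = proj v i := by
  ext a b
  simp [proj, ketbra, Matrix.conjTranspose_apply, Matrix.vecMulVec_apply, Pi.star_apply,
    mul_comm]

lemma PP_conjTranspose (v : A → A → ℂ) (i : A) : (PP (B := B) v i)ᴴ = PP v i := by
  ext ⟨a, k⟩ ⟨b, l⟩
  have h1 : star (proj v i b a) = proj v i a b := by
    have h0 := congrFun (congrFun (proj_conjTranspose v i) a) b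
    rw [Matrix.conjTranspose_apply] at h0
    exact h0
  have h2 : star ((1 : Matrix B B ℂ) l k) = (1 : Matrix B B ℂ) k l := by
    by_cases h : l = k
    · subst h; simp
    · rw [Matrix.one_apply_ne h, Matrix.one_apply_ne (Ne.symm h), star_zero]
  rw [PP, Matrix.conjTranspose_apply, Matrix.kroneckerMap_apply, Matrix.kroneckerMap_apply,
    star_mul', h1, h2]

lemma proj_mul_proj {v : A → A → ℂ} (ho : Orthonormal' v) (i j : A) :
    proj v i * proj v j = if i = j then proj v i else 0 := by
  have key : ∀ a b, (proj v i * proj v j) a b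
      = (star (v i) ⬝ᵥ v j) * (v i a * star (v j b)) := by
    intro a b
    rw [Matrix.mul_apply, dotProduct, Finset.sum_mul]
    refine Finset.sum_congr rfl fun c _ => ?_
    simp only [proj, ketbra, Matrix.vecMulVec_apply, Pi.star_apply]
    ring
  ext a b
  rw [key]
  rw [ho i j]
  by_cases h : i = j
  · subst h
    simp [proj, ketbra, Matrix.vecMulVec_apply]
  · simp [h]

lemma PP_mul_PP {v : A → A → ℂ} (ho : Orthonormal' v) (i j : A) :
    PP (B := B) v i * PP v j = if i = j then PP v i else 0 := by
  rw [PP, PP, ← Matrix.mul_kronecker_mul, Matrix.one_mul, proj_mul_proj ho]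
  by_cases h : i = j
  · simp [h, PP]
  · simp [h, Matrix.zero_kronecker]

lemma PP_idem {v : A → A → ℂ} (ho : Orthonormal' v) (i : A) :
    PP (B := B) v i * PP v i = PP v i := by
  rw [PP_mul_PP ho, if_pos rfl]

lemma sum_PP {v : A → A → ℂ} (hc : Complete' v) :
    ∑ i, PP (B := B) v i = 1 := by
  ext ⟨a, k⟩ ⟨b, l⟩
  rw [Matrix.sum_apply]
  simp only [PP, Matrix.kroneckerMap_apply]
  rw [← Finset.sum_mul]
  have h1 : ∑ i, proj v i a b = (1 : Matrix A A ℂ) a b := by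
    have h0 := congrFun (congrFun hc a) b
    rw [Matrix.sum_apply] at h0
    exact h0
  rw [h1]
  by_cases hab : a = b
  · subst hab
    by_cases hkl : k = l
    · subst hkl; simp
    · rw [Matrix.one_apply_ne hkl, Matrix.one_apply_ne (fun h => hkl (congrArg Prod.snd h)), mul_zero]
  · rw [Matrix.one_apply_ne hab, Matrix.one_apply_ne (fun h => hab (congrArg Prod.fst h)), zero_mul]

variable {v : A → A → ℂ} {ρ : Matrix (A × B) (A × B) ℂ}

lemma pinch_isHermitian (hherm : ρ.IsHermitian) : (pinch v ρ).IsHermitian := by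
  show (pinch v ρ)ᴴ = pinch v ρ
  rw [pinch_eq, Matrix.conjTranspose_sum]
  refine Finset.sum_congr rfl fun i _ => ?_
  rw [Matrix.conjTranspose_mul, Matrix.conjTranspose_mul, PP_conjTranspose, hherm.eq]
  simp only [Matrix.mul_assoc]

lemma pinch_posSemidef (hpsd : ρ.PosSemidef) : (pinch v ρ).PosSemidef := by
  rw [pinch_eq]
  refine Finset.sum_induction _ _ (fun a b ha hb => ha.add hb) Matrix.PosSemidef.zero ?_
  intro i _
  have h0 := hpsd.mul_mul_conjTranspose_same (PP (B := B) v i)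
  rwa [PP_conjTranspose] at h0

lemma pinch_trace (ho : Orthonormal' v) (hc : Complete' v) :
    (pinch v ρ).trace = ρ.trace := by
  rw [pinch_eq, Matrix.trace_sum]
  calc ∑ i, (PP v i * ρ * PP v i).trace
      = ∑ i, (ρ * PP v i).trace := by
        refine Finset.sum_congr rfl fun i _ => ?_
        rw [Matrix.trace_mul_cycle, PP_idem ho, Matrix.trace_mul_comm]
    _ = ρ.trace := by
        rw [← Matrix.trace_sum, ← Matrix.mul_sum, sum_PP hc, Matrix.mul_one]

lemma pinch_dm (hm : IsMeas v) (hρ : IsDensityMatrix ρ) : IsDensityMatrix (pinch v ρ) :=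
  ⟨pinch_posSemidef hρ.1, by rw [pinch_trace hm.1 hm.2, hρ.2]⟩

lemma P_mul_pinch (ho : Orthonormal' v) (k : A) :
    PP v k * pinch v ρ = PP v k * ρ * PP v k := by
  rw [pinch_eq, Matrix.mul_sum]
  rw [Finset.sum_eq_single k]
  · simp only [← Matrix.mul_assoc]
    rw [PP_idem ho]
  · intro i _ hik
    have h0 : PP (B := B) v k * PP v i = 0 := by
      rw [PP_mul_PP ho, if_neg (Ne.symm hik)]
    calc PP v k * (PP v i * ρ * PP v i) = PP v k * PP v i * (ρ * PP v i) := by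
          simp only [Matrix.mul_assoc]
      _ = 0 := by rw [h0, Matrix.zero_mul]
  · intro h; exact absurd (Finset.mem_univ k) h

lemma pinch_mul_P (ho : Orthonormal' v) (k : A) :
    pinch v ρ * PP v k = PP v k * ρ * PP v k := by
  rw [pinch_eq, Matrix.sum_mul]
  rw [Finset.sum_eq_single k]
  · rw [Matrix.mul_assoc, Matrix.mul_assoc, PP_idem ho, ← Matrix.mul_assoc]
  · intro i _ hik
    have h0 : PP (B := B) v i * PP v k = 0 := by
      rw [PP_mul_PP ho, if_neg hik]
    rw [Matrix.mul_assoc, h0, Matrix.mul_zero]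
  · intro h; exact absurd (Finset.mem_univ k) h

lemma trace_rho_log_pinch (hm : IsMeas v) (hherm : (pinch v ρ).IsHermitian) :
    ((pinch v ρ) * matLog (pinch v ρ)).trace = (ρ * matLog (pinch v ρ)).trace := by
  set L := matLog (pinch v ρ) with hL
  have hLP : ∀ k, PP v k * L = L * PP v k := fun k =>
    commute_matLog hherm (by rw [P_mul_pinch hm.1, pinch_mul_P hm.1])
  have hsplit : pinch v ρ * L = ∑ k, (PP v k * ρ * PP v k * L) := by
    rw [pinch_eq, Matrix.sum_mul]
  calc (pinch v ρ * L).trace = ∑ k, (PP v k * ρ * PP v k * L).trace := by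
        rw [hsplit, Matrix.trace_sum]
    _ = ∑ k, (ρ * (PP v k * L)).trace := by
        refine Finset.sum_congr rfl fun k _ => ?_
        calc (PP v k * ρ * PP v k * L).trace
            = (PP v k * (ρ * (PP v k * L))).trace := by simp only [Matrix.mul_assoc]
          _ = ((ρ * (PP v k * L)) * PP v k).trace := Matrix.trace_mul_comm _ _
          _ = (ρ * (PP v k * (L * PP v k))).trace := by simp only [Matrix.mul_assoc]
          _ = (ρ * (PP v k * (PP v k * L))).trace := by rw [← hLP k]
          _ = (ρ * (PP v k * PP v k * L)).trace := by simp only [Matrix.mul_assoc]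
          _ = (ρ * (PP v k * L)).trace := by rw [PP_idem hm.1]
    _ = (ρ * L).trace := by
        rw [← Matrix.trace_sum, ← Matrix.mul_sum, ← Matrix.sum_mul, sum_PP hm.2,
          Matrix.one_mul]

lemma pinch_ker (hm : IsMeas v) (hpsd : ρ.PosSemidef) :
    ∀ x, pinch v ρ *ᵥ x = 0 → ρ *ᵥ x = 0 := by
  intro x hx
  have hterm : ∀ k, star x ⬝ᵥ ((PP v k * ρ * PP v k) *ᵥ x)
      = star (PP v k *ᵥ x) ⬝ᵥ (ρ *ᵥ (PP v k *ᵥ x)) := by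
    intro k
    rw [← Matrix.mulVec_mulVec, ← Matrix.mulVec_mulVec, Matrix.dotProduct_mulVec]
    congr 1
    rw [Matrix.star_mulVec, PP_conjTranspose]
  have hsum : ∑ k, star (PP v k *ᵥ x) ⬝ᵥ (ρ *ᵥ (PP v k *ᵥ x)) = 0 := by
    have hx2 : ∑ k, (PP v k * ρ * PP v k) *ᵥ x = 0 := by
      rw [← sum_mulVec', ← pinch_eq, hx]
    calc ∑ k, star (PP v k *ᵥ x) ⬝ᵥ (ρ *ᵥ (PP v k *ᵥ x))
        = ∑ k, star x ⬝ᵥ ((PP v k * ρ * PP v k) *ᵥ x) :=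
          Finset.sum_congr rfl fun k _ => (hterm k).symm
      _ = star x ⬝ᵥ ∑ k, ((PP v k * ρ * PP v k) *ᵥ x) := (dotProduct_sum' _ _).symm
      _ = 0 := by rw [hx2, dotProduct_zero]
  have hzero : ∀ k, ρ *ᵥ (PP v k *ᵥ x) = 0 := by
    intro k
    have h0 := (Finset.sum_eq_zero_iff_of_nonneg
      (fun k _ => hpsd.dotProduct_mulVec_nonneg (PP v k *ᵥ x))).mp hsum k (Finset.mem_univ k)
    exact (hpsd.dotProduct_mulVec_zero_iff _).mp h0
  have hxs : x = ∑ k, PP v k *ᵥ x := by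
    rw [← sum_mulVec', sum_PP hm.2, Matrix.one_mulVec]
  calc ρ *ᵥ x = ρ *ᵥ (∑ k, PP v k *ᵥ x) := by rw [← hxs]
    _ = ∑ k, ρ *ᵥ (PP v k *ᵥ x) := by
        have h1 := map_sum (Matrix.mulVecLin ρ) (fun k => PP v k *ᵥ x) Finset.univ
        simpa only [Matrix.mulVecLin_apply] using h1
    _ = 0 := Finset.sum_eq_zero fun k _ => hzero k

lemma entropy_gap (hm : IsMeas v) (hρ : IsDensityMatrix ρ) :
    vnEntropy (pinch v ρ) - vnEntropy ρ = relEntropy ρ (pinch v ρ) := by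
  have hσdm := pinch_dm hm hρ
  have htr := trace_rho_log_pinch (ρ := ρ) hm hσdm.1.1
  rw [vnEntropy_eq_neg_trace hσdm.1.1, vnEntropy_eq_neg_trace hρ.1.1, relEntropy,
    Matrix.mul_sub, Matrix.trace_sub, Complex.sub_re, ← htr]
  ring

lemma klein_pinch (hm : IsMeas v) (hρ : IsDensityMatrix ρ) :
    vnEntropy ρ ≤ vnEntropy (pinch v ρ) ∧
      (vnEntropy (pinch v ρ) = vnEntropy ρ → ρ = pinch v ρ) := by
  have hk := klein hρ (pinch_dm hm hρ) (pinch_ker hm hρ.1)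
  constructor
  · have h0 := hk.1
    rw [← entropy_gap hm hρ] at h0
    linarith
  · intro he
    apply hk.2
    rw [← entropy_gap hm hρ, he, sub_self]

end pinch

end DeficitAux
namespace DeficitAux

open Polynomial

section cq

variable {A B : Type*} [Fintype A] [DecidableEq A] [Fintype B] [DecidableEq B]

lemma psd_trace {m : Type*} [Fintype m] [DecidableEq m] {M : Matrix m m ℂ}
    (h : M.PosSemidef) : M.trace = ((M.trace.re : ℝ) : ℂ) ∧ 0 ≤ M.trace.re := by
  have h1 := trace_eq_sum_eigenvalues h.1
  have h2 : M.trace = ((∑ i, h.1.eigenvalues i : ℝ) : ℂ) := by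
    rw [h1, Complex.ofReal_sum]
  refine ⟨by rw [h2, Complex.ofReal_re], ?_⟩
  rw [h2, Complex.ofReal_re]
  exact Finset.sum_nonneg fun i _ => h.eigenvalues_nonneg i

lemma psd_smul {m : Type*} [Fintype m] {M : Matrix m m ℂ} (h : M.PosSemidef) {c : ℝ}
    (hc : 0 ≤ c) : ((c : ℂ) • M).PosSemidef := by
  refine Matrix.PosSemidef.of_dotProduct_mulVec_nonneg ?_ ?_
  · show ((c : ℂ) • M)ᴴ = (c : ℂ) • M
    rw [Matrix.conjTranspose_smul, h.1.eq]
    congr 1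
    exact Complex.conj_ofReal c
  · intro x
    rw [Matrix.smul_mulVec, dotProduct_smul]
    have h2 : (0 : ℂ) ≤ (c : ℂ) := by exact_mod_cast hc
    exact mul_nonneg h2 (h.dotProduct_mulVec_nonneg x)

lemma trace_proj {v : A → A → ℂ} (ho : Orthonormal' v) (i : A) :
    (proj v i).trace = 1 := by
  have h0 := ho i i
  rw [if_pos rfl] at h0
  rw [Matrix.trace]
  calc ∑ a, (proj v i).diag a = ∑ a, star (v i a) * v i a := by
        refine Finset.sum_congr rfl fun a _ => ?_
        simp [proj, ketbra, Matrix.vecMulVec_apply, mul_comm]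
    _ = 1 := h0

lemma PP_rho_PP (v : A → A → ℂ) (ρ : Matrix (A × B) (A × B) ℂ) (i : A) :
    PP v i * ρ * PP v i = proj v i ⊗ₖ Oij v ρ i i := by
  ext ⟨a, k⟩ ⟨b, l⟩
  simp only [Matrix.mul_apply, PP, Matrix.kroneckerMap_apply, Fintype.sum_prod_type,
    proj, ketbra, Oij, Matrix.vecMulVec_apply, Pi.star_apply, Matrix.one_apply,
    mul_ite, ite_mul, mul_zero, zero_mul, mul_one, one_mul,
    Finset.sum_ite_eq, Finset.sum_ite_eq', Finset.mem_univ, if_true]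
  simp only [Finset.sum_mul, Finset.mul_sum]
  rw [Finset.sum_comm]
  exact Finset.sum_congr rfl fun c _ => Finset.sum_congr rfl fun d _ => by ring

lemma pinch_eq_kron (v : A → A → ℂ) (ρ : Matrix (A × B) (A × B) ℂ) :
    pinch v ρ = ∑ i, proj v i ⊗ₖ Oij v ρ i i := by
  rw [pinch_eq]
  exact Finset.sum_congr rfl fun i _ => PP_rho_PP v ρ i

lemma Oii_psd {ρ : Matrix (A × B) (A × B) ℂ} (hpsd : ρ.PosSemidef) (v : A → A → ℂ) (i : A) :
    (Oij v ρ i i).PosSemidef := by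
  classical
  set C : Matrix (A × B) B ℂ := fun p l => v i p.1 * (if p.2 = l then 1 else 0) with hC
  have heq : Oij v ρ i i = Cᴴ * ρ * C := by
    ext k l
    rw [Oij]
    rw [Matrix.mul_apply]
    simp only [Matrix.mul_apply, Matrix.conjTranspose_apply, hC, Fintype.sum_prod_type,
      star_mul', apply_ite (star : ℂ → ℂ), star_one, star_zero, mul_ite, ite_mul, mul_zero, zero_mul,
      mul_one, one_mul, Finset.sum_ite_eq, Finset.sum_ite_eq', Finset.mem_univ, if_true]
    rw [Finset.sum_comm]
    exact Finset.sum_congr rfl fun b _ => by simp [Matrix.conjTranspose, Matrix.transpose, Matrix.map, apply_ite (star : ℂ → ℂ), Finset.sum_mul]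
  rw [heq]
  exact hpsd.conjTranspose_mul_mul_same C

/-- If `ρ` is fixed by some pinching, it is a CQ state. -/
lemma cq_of_fixed {v : A → A → ℂ} {ρ : Matrix (A × B) (A × B) ℂ}
    (hm : IsMeas v) (hρ : IsDensityMatrix ρ) (hfix : pinch v ρ = ρ) : IsCQ ρ := by
  classical
  set p : A → ℝ := fun i => (Oij v ρ i i).trace.re with hp
  set σB : A → Matrix B B ℂ := fun i => ((p i : ℂ))⁻¹ • Oij v ρ i i with hσB
  have hOpsd : ∀ i, (Oij v ρ i i).PosSemidef := fun i => Oii_psd hρ.1 v i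
  have hOtr : ∀ i, (Oij v ρ i i).trace = ((p i : ℝ) : ℂ) := fun i => (psd_trace (hOpsd i)).1
  have hp0 : ∀ i, 0 ≤ p i := fun i => (psd_trace (hOpsd i)).2
  have hsum : ∑ i, p i = 1 := by
    have h1 : ρ.trace = ∑ i, ((p i : ℝ) : ℂ) := by
      conv_lhs => rw [← hfix]
      rw [pinch_eq_kron, Matrix.trace_sum]
      refine Finset.sum_congr rfl fun i _ => ?_
      rw [Matrix.trace_kronecker, trace_proj hm.1, one_mul, hOtr]
    rw [hρ.2] at h1
    exact_mod_cast h1.symm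
  refine ⟨v, p, σB, hm.1, hm.2, hp0, hsum, ?_, ?_⟩
  · intro i hpne
    constructor
    · rw [hσB]
      simp only []
      rw [show (((p i : ℝ) : ℂ))⁻¹ = (((p i)⁻¹ : ℝ) : ℂ) from by push_cast; ring]
      exact psd_smul (hOpsd i) (inv_nonneg.mpr (hp0 i))
    · rw [hσB]
      simp only [Matrix.trace_smul, smul_eq_mul]
      rw [hOtr i]
      rw [← Complex.ofReal_inv, ← Complex.ofReal_mul, inv_mul_cancel₀ hpne, Complex.ofReal_one]
  · have hterm : ∀ i, (p i : ℂ) • (proj v i ⊗ₖ σB i) = proj v i ⊗ₖ Oij v ρ i i := by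
      intro i
      by_cases hpz : p i = 0
      · have hO0 : Oij v ρ i i = 0 :=
          psd_eq_zero_of_trace_eq_zero (hOpsd i) (by rw [hOtr i, hpz]; simp)
        rw [hpz, hO0]
        simp [Matrix.kroneckerMap_zero_right]
      · rw [hσB]
        simp only [Matrix.kronecker_smul]
        rw [smul_smul, mul_inv_cancel₀ (by exact_mod_cast hpz : ((p i : ℝ) : ℂ) ≠ 0), one_smul]
    rw [show (∑ i, (p i : ℂ) • (proj v i ⊗ₖ σB i)) = ∑ i, proj v i ⊗ₖ Oij v ρ i i from
      Finset.sum_congr rfl fun i _ => hterm i]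
    rw [← pinch_eq_kron, hfix]

/-- A CQ state is fixed by the pinching in its defining basis. -/
lemma fixed_of_cq {ρ : Matrix (A × B) (A × B) ℂ} (h : IsCQ ρ) :
    ∃ v : A → A → ℂ, IsMeas v ∧ pinch v ρ = ρ := by
  obtain ⟨v, p, σB, ho, hc, hp0, hp1, hpd, hdecomp⟩ := h
  refine ⟨v, ⟨ho, hc⟩, ?_⟩
  have hPkron : ∀ k i, PP v k * (proj v i ⊗ₖ σB i) * PP v k
      = if k = i then proj v i ⊗ₖ σB i else 0 := by
    intro k i
    rw [PP, ← Matrix.mul_kronecker_mul, ← Matrix.mul_kronecker_mul, Matrix.one_mul,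
      Matrix.mul_one, proj_mul_proj ho]
    by_cases hki : k = i
    · subst hki
      rw [if_pos rfl, if_pos rfl, proj_mul_proj ho, if_pos rfl]
    · rw [if_neg hki, if_neg hki, Matrix.zero_mul, Matrix.zero_kronecker]
  conv_lhs => rw [hdecomp]
  conv_rhs => rw [hdecomp]
  rw [pinch_eq]
  calc ∑ k, PP v k * (∑ i, (p i : ℂ) • (proj v i ⊗ₖ σB i)) * PP v k
      = ∑ k, ∑ i, (p i : ℂ) • (PP v k * (proj v i ⊗ₖ σB i) * PP v k) := by
        refine Finset.sum_congr rfl fun k _ => ?_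
        rw [Matrix.mul_sum, Matrix.sum_mul]
        refine Finset.sum_congr rfl fun i _ => ?_
        rw [Matrix.mul_smul, Matrix.smul_mul]
    _ = ∑ i, ∑ k, (p i : ℂ) • (PP v k * (proj v i ⊗ₖ σB i) * PP v k) := Finset.sum_comm
    _ = ∑ i, (p i : ℂ) • (proj v i ⊗ₖ σB i) := by
        refine Finset.sum_congr rfl fun i _ => ?_
        calc ∑ k, (p i : ℂ) • (PP (B := B) v k * (proj v i ⊗ₖ σB i) * PP v k)
            = ∑ k, (if k = i then (p i : ℂ) • (proj v i ⊗ₖ σB i) else 0) :=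
              Finset.sum_congr rfl fun k _ => by
                rw [hPkron k i]
                by_cases hki : k = i <;> simp [hki]
          _ = _ := by
              rw [Finset.sum_ite_eq' Finset.univ i fun _ => (p i : ℂ) • (proj v i ⊗ₖ σB i)]
              rw [if_pos (Finset.mem_univ i)]

/-- The standard basis gives a measurement. -/
lemma stdBasis_meas : IsMeas (fun i : A => (Pi.single i 1 : A → ℂ)) := by
  constructor
  · intro i j
    rw [dotProduct]
    simp only [Pi.star_apply, Pi.single_apply, apply_ite (star : ℂ → ℂ), star_one, star_zero]
    simp [Finset.sum_ite_eq, mul_ite, ite_mul, one_mul, mul_one, eq_comm]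
  · ext a b
    rw [Matrix.sum_apply]
    by_cases hab : a = b
    · subst hab
      rw [Matrix.one_apply_eq]
      rw [Finset.sum_eq_single a]
      · simp [proj, ketbra, Matrix.vecMulVec_apply, Pi.single_apply]
      · intro i _ hia
        simp [proj, ketbra, Matrix.vecMulVec_apply, Pi.single_apply, Ne.symm hia]
      · intro h; exact absurd (Finset.mem_univ a) h
    · rw [Matrix.one_apply_ne hab]
      refine Finset.sum_eq_zero fun i _ => ?_
      by_cases hia : a = i
      · subst hia
        have hba : ¬b = a := fun h => hab h.symm
        simp [proj, ketbra, Matrix.vecMulVec_apply, Pi.single_apply, hba]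
      · simp [proj, ketbra, Matrix.vecMulVec_apply, Pi.single_apply, hia]

end cq

end DeficitAux
namespace DeficitAux

open Polynomial Filter

section topo

variable {A B : Type*} [Fintype A] [DecidableEq A] [Fintype B] [DecidableEq B]

lemma dm_eigenvalues_mem {m : Type*} [Fintype m] [DecidableEq m] {σ : Matrix m m ℂ}
    (h : IsDensityMatrix σ) (i : m) : h.1.1.eigenvalues i ∈ Set.Icc (0 : ℝ) 1 := by
  refine ⟨h.1.eigenvalues_nonneg i, ?_⟩
  have h1 := sum_eigenvalues_eq_one h
  have h2 : h.1.1.eigenvalues i ≤ ∑ j, h.1.1.eigenvalues j :=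
    Finset.single_le_sum (fun j _ => h.1.eigenvalues_nonneg j) (Finset.mem_univ i)
  linarith

lemma trace_aeval_eq {m : Type*} [Fintype m] [DecidableEq m] {σ : Matrix m m ℂ}
    (h : σ.IsHermitian) (q : ℝ[X]) :
    ((aeval σ (q.map (algebraMap ℝ ℂ))).trace).re = ∑ i, q.eval (h.eigenvalues i) := by
  obtain ⟨V, hV1, hV2, -, -, haeval⟩ := spectral_pack h
  rw [haeval, trace_unitary_conj _ _ hV2, Matrix.trace_diagonal, Complex.re_sum]
  refine Finset.sum_congr rfl fun i _ => ?_
  have h1 : eval ((h.eigenvalues i : ℝ) : ℂ) (q.map (algebraMap ℝ ℂ))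
      = ((q.eval (h.eigenvalues i) : ℝ) : ℂ) := by
    rw [Polynomial.eval_map]
    exact Polynomial.eval₂_at_apply (algebraMap ℝ ℂ) _
  rw [h1, Complex.ofReal_re]

lemma vnEntropy_approx {m : Type*} [Fintype m] [DecidableEq m] {σ : Matrix m m ℂ}
    (h : IsDensityMatrix σ) (q : ℝ[X]) {ε : ℝ}
    (hq : ∀ x ∈ Set.Icc (0 : ℝ) 1, |q.eval x - Real.negMulLog x| ≤ ε) :
    |((aeval σ (q.map (algebraMap ℝ ℂ))).trace).re - vnEntropy σ|
      ≤ (Fintype.card m) * ε := by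
  rw [trace_aeval_eq h.1.1 q, vnEntropy_eq h.1.1, ← Finset.sum_sub_distrib]
  calc |∑ i, (q.eval (h.1.1.eigenvalues i) - Real.negMulLog (h.1.1.eigenvalues i))|
      ≤ ∑ i, |q.eval (h.1.1.eigenvalues i) - Real.negMulLog (h.1.1.eigenvalues i)| :=
        Finset.abs_sum_le_sum_abs _ _
    _ ≤ ∑ _i : m, ε := Finset.sum_le_sum fun i _ => hq _ (dm_eigenvalues_mem h i)
    _ = (Fintype.card m) * ε := by
        rw [Finset.sum_const, nsmul_eq_mul, Finset.card_univ]

lemma continuous_proj (i : A) : Continuous fun v : A → A → ℂ => proj v i :=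
  Continuous.matrix_vecMulVec (continuous_apply i) (continuous_apply i).star

lemma continuous_PP (i : A) : Continuous fun v : A → A → ℂ => PP (B := B) v i := by
  apply continuous_matrix
  intro p q
  exact ((continuous_proj i).matrix_elem p.1 q.1).mul continuous_const

lemma continuous_pinch (ρ : Matrix (A × B) (A × B) ℂ) :
    Continuous fun v : A → A → ℂ => pinch v ρ := by
  have h1 : ∀ v : A → A → ℂ, pinch v ρ = ∑ i, PP v i * ρ * PP v i := fun v => pinch_eq v ρ
  simp only [h1]
  exact continuous_finset_sum _ fun i _ =>
    (((continuous_PP i).matrix_mul continuous_const).matrix_mul (continuous_PP i))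

lemma continuous_gq (ρ : Matrix (A × B) (A × B) ℂ) (q : ℝ[X]) :
    Continuous fun v : A → A → ℂ =>
      ((aeval (pinch v ρ) (q.map (algebraMap ℝ ℂ))).trace).re :=
  Complex.continuous_re.comp
    ((((q.map (algebraMap ℝ ℂ)).continuous_aeval).comp (continuous_pinch ρ)).matrix_trace)

lemma isCompact_meas : IsCompact {v : A → A → ℂ | IsMeas v} := by
  apply Metric.isCompact_of_isClosed_isBounded
  · have h1 : {v : A → A → ℂ | IsMeas v} =
        (⋂ i, ⋂ j, {v : A → A → ℂ | star (v i) ⬝ᵥ v j = (if i = j then (1 : ℂ) else 0)})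
          ∩ {v : A → A → ℂ | ∑ i, proj v i = 1} := by
      ext v
      simp only [Set.mem_setOf_eq, Set.mem_inter_iff, Set.mem_iInter, IsMeas,
        Orthonormal', Complete']
    rw [h1]
    apply IsClosed.inter
    · refine isClosed_iInter fun i => isClosed_iInter fun j => isClosed_eq ?_ continuous_const
      have h2 : (fun v : A → A → ℂ => star (v i) ⬝ᵥ v j)
          = fun v => ∑ a, star (v i a) * v j a := rfl
      rw [h2]
      apply continuous_finset_sum
      intro a _
      fun_prop
    · exact isClosed_eq (continuous_finset_sum _ fun i _ => continuous_proj i) continuous_const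
  · apply Bornology.IsBounded.subset (Metric.isBounded_closedBall (x := 0) (r := 1))
    intro v hv
    rw [Metric.mem_closedBall, dist_zero_right]
    rw [pi_norm_le_iff_of_nonneg zero_le_one]
    intro i
    rw [pi_norm_le_iff_of_nonneg zero_le_one]
    intro a
    have h0 := hv.1 i i
    rw [if_pos rfl] at h0
    have h1 : ∑ b, Complex.normSq (v i b) = 1 := by
      have h2 : star (v i) ⬝ᵥ v i = ∑ b, (Complex.normSq (v i b) : ℂ) := by
        rw [dotProduct]
        refine Finset.sum_congr rfl fun b _ => ?_
        rw [Pi.star_apply, mul_comm,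
          show star (v i b) = (starRingEnd ℂ) (v i b) from rfl, Complex.mul_conj]
      rw [h2] at h0
      exact_mod_cast h0
    have h3 : Complex.normSq (v i a) ≤ 1 := by
      rw [← h1]
      exact Finset.single_le_sum (fun b _ => Complex.normSq_nonneg _) (Finset.mem_univ a)
    have h4 : ‖v i a‖ ^ 2 ≤ 1 := by
      rw [← Complex.normSq_eq_norm_sq]
      exact h3
    nlinarith [norm_nonneg (v i a)]

lemma continuousOn_entropy (ρ : Matrix (A × B) (A × B) ℂ) (hρ : IsDensityMatrix ρ) :
    ContinuousOn (fun v : A → A → ℂ => vnEntropy (pinch v ρ)) {v | IsMeas v} := by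
  have happrox : ∀ nn : ℕ, ∃ q : ℝ[X],
      ∀ x ∈ Set.Icc (0 : ℝ) 1, |q.eval x - Real.negMulLog x| ≤ 1 / (nn + 1) := by
    intro nn
    obtain ⟨q, hq⟩ := exists_polynomial_near_of_continuousOn 0 1 Real.negMulLog
      (Real.continuous_negMulLog.continuousOn) (1 / (nn + 1)) (by positivity)
    exact ⟨q, fun x hx => le_of_lt (hq x hx)⟩
  choose qs hqs using happrox
  have htu : TendstoUniformlyOn
      (fun nn (v : A → A → ℂ) =>
        ((aeval (pinch v ρ) ((qs nn).map (algebraMap ℝ ℂ))).trace).re)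
      (fun v => vnEntropy (pinch v ρ)) atTop {v | IsMeas v} := by
    rw [Metric.tendstoUniformlyOn_iff]
    intro ε hε
    have hlim : Tendsto (fun nn : ℕ => (Fintype.card (A × B) : ℝ) * (1 / (nn + 1)))
        atTop (nhds 0) := by
      have := tendsto_one_div_add_atTop_nhds_zero_nat.const_mul (Fintype.card (A × B) : ℝ)
      simpa using this
    have hev := hlim.eventually (gt_mem_nhds hε)
    filter_upwards [hev] with nn hnn
    intro v hv
    have hb := vnEntropy_approx (pinch_dm hv hρ) (qs nn) (hqs nn)
    rw [Real.dist_eq, abs_sub_comm]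
    exact lt_of_le_of_lt hb hnn
  exact htu.continuousOn (Filter.Eventually.of_forall fun nn => (continuous_gq ρ (qs nn)).continuousOn).frequently

end topo

end DeficitAux

/-- the one-way information deficit is nonnegative, and vanishes
iff `ρ` is a classical-quantum state. -/
theorem deficit_nonneg_and_eq_zero_iff {A B : Type*} [Fintype A] [DecidableEq A]
    [Fintype B] [DecidableEq B]
    (ρ : Matrix (A × B) (A × B) ℂ) (hρ : IsDensityMatrix ρ) :
    0 ≤ deficit ρ ∧ (deficit ρ = 0 ↔ IsCQ ρ) := by
  classical
  obtain ⟨v₀, hv₀K, hmin⟩ := (DeficitAux.isCompact_meas).exists_isMinOn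
    ⟨_, DeficitAux.stdBasis_meas (A := A)⟩ (DeficitAux.continuousOn_entropy ρ hρ)
  have hv₀ : IsMeas v₀ := hv₀K
  set S : Set ℝ := {x : ℝ | ∃ v : A → A → ℂ, IsMeas v ∧ x = vnEntropy (pinch v ρ)} with hS
  have hSne : S.Nonempty := ⟨vnEntropy (pinch v₀ ρ), v₀, hv₀, rfl⟩
  have hlb : ∀ x ∈ S, vnEntropy ρ ≤ x := by
    rintro x ⟨w, hw, rfl⟩
    exact (DeficitAux.klein_pinch hw hρ).1
  have hbdd : BddBelow S := ⟨vnEntropy ρ, hlb⟩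
  have hInf : sInf S = vnEntropy (pinch v₀ ρ) := by
    apply le_antisymm
    · exact csInf_le hbdd ⟨v₀, hv₀, rfl⟩
    · refine le_csInf hSne ?_
      rintro x ⟨w, hw, rfl⟩
      exact hmin hw
  have hdef : deficit ρ = sInf S - vnEntropy ρ := rfl
  refine ⟨?_, ?_, ?_⟩
  · rw [hdef, hInf]
    have h0 := (DeficitAux.klein_pinch hv₀ hρ).1
    linarith
  · intro h0
    rw [hdef] at h0
    have h2 : vnEntropy (pinch v₀ ρ) = vnEntropy ρ := by rw [← hInf]; linarith
    have h3 := (DeficitAux.klein_pinch hv₀ hρ).2 h2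
    exact DeficitAux.cq_of_fixed hv₀ hρ h3.symm
  · intro hcq
    obtain ⟨w, hw, hfix⟩ := DeficitAux.fixed_of_cq hcq
    have hmem : vnEntropy ρ ∈ S := ⟨w, hw, by rw [hfix]⟩
    have h1 : sInf S ≤ vnEntropy ρ := csInf_le hbdd hmem
    have h2 : vnEntropy ρ ≤ sInf S := le_csInf hSne hlb
    rw [hdef]
    linarith
end

section
/- Strict positivity of created entanglement: if ρ on H_A ⊗ H_B is not a classical-quantum state, then for every complete set of rank-one orthogonal projectors {Π_i} on H_A, S(Σ_i (Π_i⊗I)ρ(Π_i⊗I)) − S(ρ) > 0. -/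
open Matrix Kronecker BigOperators
open scoped ComplexOrder

noncomputable section
set_option linter.unusedSectionVars false
namespace PinchAux

variable {n : Type*} [Fintype n] [DecidableEq n]

lemma unit1 {M : Matrix n n ℂ} (hM : M.IsHermitian) :
    star (hM.eigenvectorUnitary : Matrix n n ℂ) * (hM.eigenvectorUnitary : Matrix n n ℂ) = 1 :=
  Matrix.mem_unitaryGroup_iff'.mp hM.eigenvectorUnitary.2

lemma unit2 {M : Matrix n n ℂ} (hM : M.IsHermitian) :
    (hM.eigenvectorUnitary : Matrix n n ℂ) * star (hM.eigenvectorUnitary : Matrix n n ℂ) = 1 :=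
  Matrix.mem_unitaryGroup_iff.mp hM.eigenvectorUnitary.2

lemma ofReal_comp {M : Matrix n n ℂ} (hM : M.IsHermitian) :
    (RCLike.ofReal ∘ hM.eigenvalues : n → ℂ) = fun i => ((hM.eigenvalues i : ℝ) : ℂ) := rfl

lemma trace_eq_sum_eig {M : Matrix n n ℂ} (hM : M.IsHermitian) :
    M.trace = ((∑ i, hM.eigenvalues i : ℝ) : ℂ) := by
  conv_lhs => rw [hM.spectral_theorem]
  rw [Unitary.conjStarAlgAut_apply, Matrix.trace_mul_cycle, unit1 hM, Matrix.one_mul, Matrix.trace_diagonal]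
  push_cast
  rfl

lemma psd_trace_re_nonneg {M : Matrix n n ℂ} (hM : M.PosSemidef) : 0 ≤ M.trace.re := by
  rw [trace_eq_sum_eig hM.1, Complex.ofReal_re]
  exact Finset.sum_nonneg fun i _ => hM.eigenvalues_nonneg i

lemma psd_trace_ofReal {M : Matrix n n ℂ} (hM : M.PosSemidef) :
    M.trace = ((M.trace.re : ℝ) : ℂ) := by
  rw [trace_eq_sum_eig hM.1, Complex.ofReal_re]

lemma psd_trace_zero {M : Matrix n n ℂ} (hM : M.PosSemidef) (h : M.trace.re = 0) : M = 0 := by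
  have hs : ∑ i, hM.1.eigenvalues i = 0 := by
    have := trace_eq_sum_eig hM.1
    rw [this, Complex.ofReal_re] at h; exact h
  have hz : ∀ i, hM.1.eigenvalues i = 0 := by
    intro i
    have := (Finset.sum_eq_zero_iff_of_nonneg (fun i _ => hM.eigenvalues_nonneg i)).mp hs
    exact this i (Finset.mem_univ i)
  have : M = (hM.1.eigenvectorUnitary : Matrix n n ℂ) *
      Matrix.diagonal (RCLike.ofReal ∘ hM.1.eigenvalues) *
      star (hM.1.eigenvectorUnitary : Matrix n n ℂ) := hM.1.spectral_theorem
  rw [this]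
  have : Matrix.diagonal (RCLike.ofReal ∘ hM.1.eigenvalues : n → ℂ) = 0 := by
    rw [ofReal_comp]
    have : (fun i => ((hM.1.eigenvalues i : ℝ) : ℂ)) = fun _ => (0 : ℂ) := by
      funext i; rw [hz i]; simp
    rw [this, Matrix.diagonal_zero]
  rw [this, Matrix.mul_zero, Matrix.zero_mul]

lemma psd_smul {M : Matrix n n ℂ} (hM : M.PosSemidef) {c : ℝ} (hc : 0 ≤ c) :
    ((c : ℂ) • M).PosSemidef := by
  constructor
  · show ((c : ℂ) • M)ᴴ = (c : ℂ) • M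
    rw [Matrix.conjTranspose_smul, hM.1.eq]
    norm_num [Complex.star_def, Complex.conj_ofReal]
  · exact (hM.smul (a := (c : ℂ)) (Complex.zero_le_real.mpr hc)).2

lemma vecMulVec_mul (a b c d : n → ℂ) :
    Matrix.vecMulVec a b * Matrix.vecMulVec c d = (b ⬝ᵥ c) • Matrix.vecMulVec a d := by
  ext i j
  simp only [Matrix.mul_apply, Matrix.vecMulVec_apply, Matrix.smul_apply, dotProduct,
    smul_eq_mul, Finset.sum_mul]
  exact Finset.sum_congr rfl fun k _ => by ring

lemma vecMulVec_conjT (a b : n → ℂ) :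
    (Matrix.vecMulVec a b)ᴴ = Matrix.vecMulVec (star b) (star a) := by
  ext i j
  simp [Matrix.conjTranspose_apply, Matrix.vecMulVec_apply, mul_comm]

lemma mul_conjT_diag_entry (M : Matrix n n ℂ) (k : n) :
    (M * Mᴴ) k k = ((∑ j, Complex.normSq (M k j) : ℝ) : ℂ) := by
  simp only [Matrix.mul_apply, Matrix.conjTranspose_apply]
  push_cast
  exact Finset.sum_congr rfl fun j _ => by
    rw [Complex.star_def, Complex.mul_conj]

lemma conjT_mul_diag_entry (M : Matrix n n ℂ) (j : n) :
    (Mᴴ * M) j j = ((∑ k, Complex.normSq (M k j) : ℝ) : ℂ) := by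
  simp only [Matrix.mul_apply, Matrix.conjTranspose_apply]
  push_cast
  exact Finset.sum_congr rfl fun k _ => by
    rw [Complex.star_def, mul_comm, Complex.mul_conj]

lemma quad_diag_entry (M : Matrix n n ℂ) (d : n → ℝ) (k : n) :
    (M * (Matrix.diagonal (fun j => (d j : ℂ)) * Mᴴ)) k k
      = ((∑ j, Complex.normSq (M k j) * d j : ℝ) : ℂ) := by
  rw [← Matrix.mul_assoc, Matrix.mul_apply]
  push_cast
  refine Finset.sum_congr rfl fun j _ => ?_
  rw [Matrix.mul_diagonal, Matrix.conjTranspose_apply, Complex.star_def,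
    mul_comm (M k j) ((d j : ℂ)), mul_assoc, Complex.mul_conj]
  ring


section Batch2
variable {A B : Type*} [Fintype A] [DecidableEq A] [Fintype B] [DecidableEq B]

lemma proj_mul {v : A → A → ℂ} (hv : Orthonormal' v) (i j : A) :
    proj v i * proj v j = if i = j then proj v i else 0 := by
  rw [proj, proj, ketbra, ketbra, vecMulVec_mul, hv i j]
  split_ifs with h
  · subst h; rw [one_smul]
  · rw [zero_smul]

lemma proj_conjT (v : A → A → ℂ) (i : A) : (proj v i)ᴴ = proj v i := by
  rw [proj, ketbra, vecMulVec_conjT, star_star]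

lemma trace_proj {v : A → A → ℂ} (hv : Orthonormal' v) (i : A) : (proj v i).trace = 1 := by
  have h := hv i i
  simp only [if_pos rfl, dotProduct, Pi.star_apply] at h
  rw [proj, ketbra, Matrix.trace]
  simpa [Matrix.diag, Matrix.vecMulVec_apply, mul_comm] using h

lemma kron_conjT (M : Matrix A A ℂ) (N : Matrix B B ℂ) : (M ⊗ₖ N)ᴴ = Mᴴ ⊗ₖ Nᴴ := by
  ext ⟨a,b⟩ ⟨c,d⟩
  simp [Matrix.conjTranspose_apply, Matrix.kroneckerMap_apply]

lemma sum_kron {ι : Type*} [Fintype ι] (f : ι → Matrix A A ℂ) (N : Matrix B B ℂ) :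
    (∑ i, f i) ⊗ₖ N = ∑ i, f i ⊗ₖ N := by
  ext ⟨a,b⟩ ⟨c,d⟩
  simp [Matrix.kroneckerMap_apply, Matrix.sum_apply, Finset.sum_mul]

lemma pinch_term (v : A → A → ℂ) (ρ : Matrix (A × B) (A × B) ℂ) (i : A) :
    (proj v i ⊗ₖ (1 : Matrix B B ℂ)) * ρ * (proj v i ⊗ₖ (1 : Matrix B B ℂ))
      = proj v i ⊗ₖ Oij v ρ i i := by
  ext ⟨a,k⟩ ⟨b,l⟩
  simp only [Matrix.mul_apply, Matrix.kroneckerMap_apply, Matrix.one_apply, proj, ketbra,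
    Matrix.vecMulVec_apply, Oij, Pi.star_apply, Fintype.sum_prod_type, mul_ite, mul_zero,
    mul_one, ite_mul, zero_mul, Finset.sum_ite_eq, Finset.sum_ite_eq', Finset.mem_univ,
    if_true]
  simp only [Finset.sum_mul, Finset.mul_sum]
  rw [Finset.sum_comm]
  exact Finset.sum_congr rfl fun x _ => Finset.sum_congr rfl fun y _ => by ring

lemma Oij_diag_psd {ρ : Matrix (A × B) (A × B) ℂ} (hρ : ρ.PosSemidef) (v : A → A → ℂ) (i : A) :
    (Oij v ρ i i).PosSemidef := by
  have hX : Oij v ρ i i =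
      (Matrix.of fun (q : A × B) (l : B) => v i q.1 * (if q.2 = l then (1:ℂ) else 0))ᴴ * ρ *
      (Matrix.of fun (q : A × B) (l : B) => v i q.1 * (if q.2 = l then (1:ℂ) else 0)) := by
    ext k l
    simp only [Matrix.mul_apply, Matrix.conjTranspose_apply, Matrix.of_apply, Oij,
      Fintype.sum_prod_type, Pi.star_apply, mul_ite, mul_zero, mul_one, ite_mul, zero_mul,
      star_mul', apply_ite (star : ℂ → ℂ), star_one, star_zero, Finset.sum_ite_eq, Finset.sum_ite_eq',
      Finset.mem_univ, if_true]
    simp only [Finset.sum_mul]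
    rw [Finset.sum_comm]
  rw [hX]
  exact hρ.conjTranspose_mul_mul_same _

end Batch2
end PinchAux
end

/-- strict positivity of created entanglement: if `ρ` is not a
classical-quantum state, then every von Neumann measurement on `A` strictly increases
the entropy: `S(∑ i (Π_i⊗I)ρ(Π_i⊗I)) - S(ρ) > 0`. -/
theorem pinch_entropy_pos_of_not_cq {A B : Type*} [Fintype A] [DecidableEq A]
    [Fintype B] [DecidableEq B]
    (ρ : Matrix (A × B) (A × B) ℂ) (hρ : IsDensityMatrix ρ) (hcq : ¬ IsCQ ρ) :
    ∀ v : A → A → ℂ, IsMeas v → 0 < vnEntropy (pinch v ρ) - vnEntropy ρ := by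
    classical
  intro v hvm
  obtain ⟨hvo, hvc⟩ := hvm
  have hρpsd := hρ.1
  have hρH : ρ.IsHermitian := hρpsd.1
  set Q : A → Matrix (A × B) (A × B) ℂ := fun i => proj v i ⊗ₖ (1 : Matrix B B ℂ) with hQdef
  have hQH : ∀ i, (Q i)ᴴ = Q i := by
    intro i
    simp only [hQdef]
    rw [PinchAux.kron_conjT, PinchAux.proj_conjT, Matrix.conjTranspose_one]
  have hQmul : ∀ i j, Q i * Q j = if i = j then Q i else 0 := by
    intro i j
    simp only [hQdef]
    rw [← Matrix.mul_kronecker_mul, PinchAux.proj_mul hvo, Matrix.one_mul]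
    split_ifs with h
    · rfl
    · rw [Matrix.zero_kronecker]
  have hQsum : ∑ i, Q i = 1 := by
    simp only [hQdef]
    rw [← PinchAux.sum_kron, hvc, Matrix.one_kronecker_one]
  have hPdef : pinch v ρ = ∑ i, Q i * ρ * Q i := by
    simp only [pinch, hQdef]
  have hterm_psd : ∀ i, (Q i * ρ * Q i).PosSemidef := by
    intro i
    have h := hρpsd.conjTranspose_mul_mul_same (Q i)
    rwa [hQH i] at h
  have hPpsd : (pinch v ρ).PosSemidef := by
    rw [hPdef]
    exact Finset.sum_induction _ _ (fun a b ha hb => ha.add hb) Matrix.PosSemidef.zero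
      (fun i _ => hterm_psd i)
  have hPH : (pinch v ρ).IsHermitian := hPpsd.1
  have hPtr : (pinch v ρ).trace = 1 := by
    rw [hPdef, Matrix.trace_sum]
    calc ∑ i, (Q i * ρ * Q i).trace = ∑ i, (Q i * ρ).trace := by
          refine Finset.sum_congr rfl fun i _ => ?_
          rw [Matrix.trace_mul_cycle, hQmul i i, if_pos rfl]
      _ = ((∑ i, Q i) * ρ).trace := by rw [Finset.sum_mul, Matrix.trace_sum]
      _ = 1 := by rw [hQsum, Matrix.one_mul, hρ.2]
  -- Oij structure of the pinch
  have hOp : ∀ i, (Oij v ρ i i).PosSemidef := fun i => PinchAux.Oij_diag_psd hρpsd v i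
  have hpinchO : pinch v ρ = ∑ i, proj v i ⊗ₖ Oij v ρ i i := by
    rw [hPdef]
    exact Finset.sum_congr rfl fun i _ => by
      simp only [hQdef]; exact PinchAux.pinch_term v ρ i
  -- entropies
  have hSP : vnEntropy (pinch v ρ) = ∑ k, Real.negMulLog (hPH.eigenvalues k) := by
    rw [vnEntropy, dif_pos hPH]
  have hSρ : vnEntropy ρ = ∑ j, Real.negMulLog (hρH.eigenvalues j) := by
    rw [vnEntropy, dif_pos hρH]
  -- spectral data
  set U : Matrix (A × B) (A × B) ℂ := (hPH.eigenvectorUnitary : Matrix (A × B) (A × B) ℂ)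
    with hUdef
  set Uρ : Matrix (A × B) (A × B) ℂ := (hρH.eigenvectorUnitary : Matrix (A × B) (A × B) ℂ)
    with hUρdef
  set μ : (A × B) → ℝ := hPH.eigenvalues with hμdef
  set lam : (A × B) → ℝ := hρH.eigenvalues with hlamdef
  have hU1 : star U * U = 1 := PinchAux.unit1 hPH
  have hU2 : U * star U = 1 := PinchAux.unit2 hPH
  have hUρ1 : star Uρ * Uρ = 1 := PinchAux.unit1 hρH
  have hUρ2 : Uρ * star Uρ = 1 := PinchAux.unit2 hρH
  have hμ0 : ∀ k, 0 ≤ μ k := fun k => hPpsd.eigenvalues_nonneg k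
  have hlam0 : ∀ j, 0 ≤ lam j := fun j => hρpsd.eigenvalues_nonneg j
  set V : A → Matrix (A × B) (A × B) ℂ := fun i => star U * (Q i * Uρ) with hVdef
  set W : Matrix (A × B) (A × B) ℂ := star U * Uρ with hWdef
  set D : (A × B) → (A × B) → ℝ := fun k j => ∑ i, Complex.normSq (V i k j) with hDdef
  have cU : ∀ X : Matrix (A × B) (A × B) ℂ, U * (star U * X) = X := fun X => by
    rw [← Matrix.mul_assoc, hU2, Matrix.one_mul]
  have cUρ2 : ∀ X : Matrix (A × B) (A × B) ℂ, Uρ * (star Uρ * X) = X := fun X => by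
    rw [← Matrix.mul_assoc, hUρ2, Matrix.one_mul]
  have cQ : ∀ i (X : Matrix (A × B) (A × B) ℂ), Q i * (Q i * X) = Q i * X := fun i X => by
    rw [← Matrix.mul_assoc, hQmul i i, if_pos rfl]
  have hVstar : ∀ i, (V i)ᴴ = star Uρ * (Q i * U) := by
    intro i
    simp only [hVdef, Matrix.star_eq_conjTranspose, Matrix.conjTranspose_mul,
      Matrix.conjTranspose_conjTranspose, hQH i, Matrix.mul_assoc]
  have hVsum : ∑ i, V i = W := by
    simp only [hVdef, hWdef]
    rw [← Finset.mul_sum, ← Finset.sum_mul, hQsum, Matrix.one_mul]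
  have hVVt : ∀ i, V i * (V i)ᴴ = star U * (Q i * U) := by
    intro i
    rw [hVstar i]
    simp only [hVdef, Matrix.mul_assoc]
    rw [cUρ2 (Q i * U), cQ i U]
  have hVtV : ∀ i, (V i)ᴴ * V i = star Uρ * (Q i * Uρ) := by
    intro i
    rw [hVstar i]
    simp only [hVdef, Matrix.mul_assoc]
    rw [cU (Q i * Uρ), cQ i Uρ]
  have hsumVVt : ∑ i, V i * (V i)ᴴ = 1 := by
    calc ∑ i, V i * (V i)ᴴ = ∑ i, star U * (Q i * U) :=
          Finset.sum_congr rfl fun i _ => hVVt i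
      _ = star U * ((∑ i, Q i) * U) := by rw [Finset.sum_mul, Finset.mul_sum]
      _ = 1 := by rw [hQsum, Matrix.one_mul, hU1]
  have hsumVtV : ∑ i, (V i)ᴴ * V i = 1 := by
    calc ∑ i, (V i)ᴴ * V i = ∑ i, star Uρ * (Q i * Uρ) :=
          Finset.sum_congr rfl fun i _ => hVtV i
      _ = star Uρ * ((∑ i, Q i) * Uρ) := by rw [Finset.sum_mul, Finset.mul_sum]
      _ = 1 := by rw [hQsum, Matrix.one_mul, hUρ1]
  have hD0 : ∀ k j, 0 ≤ D k j := fun k j =>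
    Finset.sum_nonneg fun i _ => Complex.normSq_nonneg _
  have hrow : ∀ k, ∑ j, D k j = 1 := by
    intro k
    have h1 : ((1 : Matrix (A × B) (A × B) ℂ)) k k = 1 := Matrix.one_apply_eq k
    rw [← hsumVVt, Matrix.sum_apply] at h1
    have h2 : ∑ i, (V i * (V i)ᴴ) k k = ((∑ j, D k j : ℝ) : ℂ) := by
      calc ∑ i, (V i * (V i)ᴴ) k k
          = ∑ i, ((∑ j, Complex.normSq (V i k j) : ℝ) : ℂ) :=
            Finset.sum_congr rfl fun i _ => PinchAux.mul_conjT_diag_entry _ k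
        _ = ((∑ i, ∑ j, Complex.normSq (V i k j) : ℝ) : ℂ) := by push_cast; rfl
        _ = _ := by rw [Finset.sum_comm]
    rw [h2] at h1
    exact_mod_cast h1
  have hcol : ∀ j, ∑ k, D k j = 1 := by
    intro j
    have h1 : ((1 : Matrix (A × B) (A × B) ℂ)) j j = 1 := Matrix.one_apply_eq j
    rw [← hsumVtV, Matrix.sum_apply] at h1
    have h2 : ∑ i, ((V i)ᴴ * V i) j j = ((∑ k, D k j : ℝ) : ℂ) := by
      calc ∑ i, ((V i)ᴴ * V i) j j
          = ∑ i, ((∑ k, Complex.normSq (V i k j) : ℝ) : ℂ) :=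
            Finset.sum_congr rfl fun i _ => PinchAux.conjT_mul_diag_entry _ j
        _ = ((∑ i, ∑ k, Complex.normSq (V i k j) : ℝ) : ℂ) := by push_cast; rfl
        _ = _ := by rw [Finset.sum_comm]
    rw [h2] at h1
    exact_mod_cast h1
  -- the key balance equation
  have hdg : star U * (pinch v ρ) * U = Matrix.diagonal (fun k => ((μ k : ℝ) : ℂ)) := by
    have h := hPH.conjStarAlgAut_star_eigenvectorUnitary
    rw [Unitary.conjStarAlgAut_apply, Unitary.coe_star, star_star, PinchAux.ofReal_comp] at h
    exact h
  have hexp : star U * (pinch v ρ) * U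
      = ∑ i, V i * (Matrix.diagonal (fun j => ((lam j : ℝ) : ℂ)) * (V i)ᴴ) := by
    rw [hPdef, Finset.mul_sum, Finset.sum_mul]
    refine Finset.sum_congr rfl fun i _ => ?_
    conv_lhs => rw [hρH.spectral_theorem]
    rw [Unitary.conjStarAlgAut_apply, PinchAux.ofReal_comp hρH]
    rw [hVstar i]
    simp only [hVdef, Matrix.mul_assoc]
    rfl
  have hμr : ∀ k, μ k = ∑ j, D k j * lam j := by
    intro k
    have h2 := congrArg (fun M : Matrix (A × B) (A × B) ℂ => M k k) (hdg.symm.trans hexp)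
    simp only [Matrix.diagonal_apply_eq, Matrix.sum_apply] at h2
    have h3 : ∑ i, (V i * (Matrix.diagonal (fun j => ((lam j : ℝ) : ℂ)) * (V i)ᴴ)) k k
        = ((∑ j, D k j * lam j : ℝ) : ℂ) := by
      calc ∑ i, (V i * (Matrix.diagonal (fun j => ((lam j : ℝ) : ℂ)) * (V i)ᴴ)) k k
          = ∑ i, ((∑ j, Complex.normSq (V i k j) * lam j : ℝ) : ℂ) :=
            Finset.sum_congr rfl fun i _ => PinchAux.quad_diag_entry _ lam k
        _ = ((∑ i, ∑ j, Complex.normSq (V i k j) * lam j : ℝ) : ℂ) := by push_cast; rfl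
        _ = ((∑ j, ∑ i, Complex.normSq (V i k j) * lam j : ℝ) : ℂ) := by rw [Finset.sum_comm]
        _ = _ := by
            congr 1
            exact Finset.sum_congr rfl fun j _ => by
              simp only [hDdef, Finset.sum_mul]
    rw [h3] at h2
    exact_mod_cast h2
  -- Jensen
  have hle : ∀ k, ∑ j, D k j * Real.negMulLog (lam j) ≤ Real.negMulLog (μ k) := by
    intro k
    have h := Real.concaveOn_negMulLog.le_map_sum (t := Finset.univ) (w := D k) (p := lam)
      (fun j _ => hD0 k j) (hrow k) (fun j _ => Set.mem_Ici.mpr (hlam0 j))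
    simp only [smul_eq_mul] at h
    rwa [← hμr k] at h
  have hchain : ∑ j, Real.negMulLog (lam j) = ∑ k, ∑ j, D k j * Real.negMulLog (lam j) := by
    calc ∑ j, Real.negMulLog (lam j) = ∑ j, (∑ k, D k j) * Real.negMulLog (lam j) := by
          refine Finset.sum_congr rfl fun j _ => by rw [hcol j, one_mul]
      _ = ∑ j, ∑ k, D k j * Real.negMulLog (lam j) := by
          refine Finset.sum_congr rfl fun j _ => Finset.sum_mul ..
      _ = _ := Finset.sum_comm
  have hSle : vnEntropy ρ ≤ vnEntropy (pinch v ρ) := by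
    rw [hSρ, hSP, hchain]
    exact Finset.sum_le_sum fun k _ => hle k
  -- strictness
  rcases lt_or_eq_of_le hSle with hlt | heq
  · linarith
  exfalso
  -- termwise equality
  have hsum_eq : ∑ k, ∑ j, D k j * Real.negMulLog (lam j) = ∑ k, Real.negMulLog (μ k) := by
    rw [← hchain]
    rw [hSρ, hSP] at heq
    exact heq
  have hkk : ∀ k, ∑ j, D k j * Real.negMulLog (lam j) = Real.negMulLog (μ k) := by
    intro k
    exact (Finset.sum_eq_sum_iff_of_le fun k _ => hle k).mp hsum_eq k (Finset.mem_univ k)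
  have hsupp : ∀ k j, D k j ≠ 0 → lam j = μ k := by
    intro k j hDkj
    have hiff := Real.strictConcaveOn_negMulLog.map_sum_eq_iff' (t := Finset.univ)
      (w := D k) (p := lam) (fun j _ => hD0 k j) (hrow k)
      (fun j _ => Set.mem_Ici.mpr (hlam0 j))
    simp only [smul_eq_mul] at hiff
    have hEq : Real.negMulLog (∑ j, D k j * lam j) = ∑ j, D k j * Real.negMulLog (lam j) := by
      rw [← hμr k, hkk k]
    have h3 := hiff.mp hEq j (Finset.mem_univ j) hDkj
    rw [h3, ← hμr k]
  have hWD : ∀ k j, W k j ≠ 0 → μ k = lam j := by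
    intro k j hW
    refine (hsupp k j ?_).symm
    intro hD
    apply hW
    have hz : ∀ i, V i k j = 0 := by
      intro i
      have h4 := (Finset.sum_eq_zero_iff_of_nonneg
        (fun i (_ : i ∈ Finset.univ) => Complex.normSq_nonneg (V i k j))).mp hD i
        (Finset.mem_univ i)
      exact Complex.normSq_eq_zero.mp h4
    rw [← hVsum, Matrix.sum_apply]
    exact Finset.sum_eq_zero fun i _ => hz i
  have hDW : Matrix.diagonal (fun k => ((μ k : ℝ) : ℂ)) * W
      = W * Matrix.diagonal (fun j => ((lam j : ℝ) : ℂ)) := by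
    ext k j
    rw [Matrix.diagonal_mul, Matrix.mul_diagonal]
    by_cases h : W k j = 0
    · rw [h, mul_zero, zero_mul]
    · rw [hWD k j h]; ring
  have hfix : pinch v ρ = ρ := by
    have e1 : pinch v ρ = U * (Matrix.diagonal (fun k => ((μ k : ℝ) : ℂ)) * star U) := by
      have h := hPH.spectral_theorem
      rw [Unitary.conjStarAlgAut_apply, PinchAux.ofReal_comp, Matrix.mul_assoc] at h
      exact h
    have e2 : ρ = Uρ * (Matrix.diagonal (fun j => ((lam j : ℝ) : ℂ)) * star Uρ) := by
      have h := hρH.spectral_theorem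
      rw [Unitary.conjStarAlgAut_apply, PinchAux.ofReal_comp, Matrix.mul_assoc] at h
      exact h
    rw [e1, e2]
    have h5 : Matrix.diagonal (fun k => ((μ k : ℝ) : ℂ)) * star U
        = (Matrix.diagonal (fun k => ((μ k : ℝ) : ℂ)) * W) * star Uρ := by
      simp only [hWdef, Matrix.mul_assoc, hUρ2, Matrix.mul_one]
    rw [h5, hDW]
    simp only [hWdef, Matrix.mul_assoc]
    rw [cU (Uρ * (Matrix.diagonal (fun j => ((lam j : ℝ) : ℂ)) * star Uρ))]
  -- classical-quantum structure
  apply hcq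
  refine ⟨v, fun i => ((Oij v ρ i i).trace).re,
    fun i => if h : ((Oij v ρ i i).trace).re = 0 then 0
      else ((((Oij v ρ i i).trace).re : ℂ))⁻¹ • Oij v ρ i i, hvo, hvc,
    fun i => PinchAux.psd_trace_re_nonneg (hOp i), ?_, ?_, ?_⟩
  · -- sum of probabilities
    have h6 : ((∑ i, ((Oij v ρ i i).trace).re : ℝ) : ℂ) = 1 := by
      push_cast
      calc (∑ i, (((Oij v ρ i i).trace).re : ℂ))
          = ∑ i, (Oij v ρ i i).trace := Finset.sum_congr rfl fun i _ =>
            (PinchAux.psd_trace_ofReal (hOp i)).symm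
        _ = ∑ i, (proj v i ⊗ₖ Oij v ρ i i).trace := Finset.sum_congr rfl fun i _ => by
            rw [Matrix.trace_kronecker, PinchAux.trace_proj hvo, one_mul]
        _ = (pinch v ρ).trace := by rw [hpinchO, Matrix.trace_sum]
        _ = 1 := hPtr
    exact_mod_cast h6
  · -- density matrices
    intro i hpi
    simp only at hpi ⊢
    rw [dif_neg hpi]
    constructor
    · have h7 := PinchAux.psd_smul (hOp i) (c := (((Oij v ρ i i).trace).re)⁻¹)
        (inv_nonneg.mpr (PinchAux.psd_trace_re_nonneg (hOp i)))
      rwa [Complex.ofReal_inv] at h7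
    · rw [Matrix.trace_smul, smul_eq_mul]
      nth_rewrite 2 [PinchAux.psd_trace_ofReal (hOp i)]
      exact inv_mul_cancel₀ (Complex.ofReal_ne_zero.mpr hpi)
  · -- the decomposition
    conv_lhs => rw [← hfix, hpinchO]
    refine Finset.sum_congr rfl fun i _ => ?_
    simp only
    by_cases h : ((Oij v ρ i i).trace).re = 0
    · rw [dif_pos h, Matrix.kronecker_zero, smul_zero,
        PinchAux.psd_trace_zero (hOp i) h, Matrix.kronecker_zero]
    · rw [dif_neg h, Matrix.kronecker_smul, smul_smul,
        mul_inv_cancel₀ (Complex.ofReal_ne_zero.mpr h), one_smul]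
end
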